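/- arXiv:1506.06180 — 3 statements merged into one kernel-verified Lean document; each statement's English description precedes it below -/
import Mathlib

section
/- Let constants σ₀ > 0, β₀, μ₀, c₀, λ₀ and ρ ∈ (-1, 1) be given, set b₀ := μ₀ - σ₀²/2, and let V⁽⁰⁾(t, w) be a smooth solution on (-∞, T] × (0, ∞) of ∂_t V⁽⁰⁾ - (1/2) λ₀² (∂_w V⁽⁰⁾)²/(∂_w² V⁽⁰⁾) = 0 with ∂_w V⁽⁰⁾ > 0 and ∂_w² V⁽⁰⁾ < 0, and R := -∂_w V⁽⁰⁾/∂_w² V⁽⁰⁾. Define the change of variable z(t, w) := -log ∂_w V⁽⁰⁾(t, w) + (1/2) λ₀² (T - t). Then for every smooth function q(t, x, y, z), the function V̂(t, x, y, w) := q(t, x, y, z(t, w)) satisfies (∂_t + 𝒜₀ + ℬ₀) V̂ (t,x,y,w) = [(∂_t + 𝒜₀ + 𝒞₀) q](t, x, y, z(t, w)), where 𝒜₀ := (1/2)σ₀² ∂_x² + ρσ₀β₀ ∂_x∂_y + (1/2)β₀² ∂_y² + b₀ ∂_x + c₀ ∂_y, ℬ₀ := (1/2)λ₀² R² ∂_w²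 + λ₀² R ∂_w + ρβ₀λ₀ R ∂_w∂_y + μ₀ R ∂_w∂_x, and 𝒞₀ := (1/2)λ₀² ∂_z² + ρβ₀λ₀ ∂_y∂_z + μ₀ ∂_x∂_z. -/
noncomputable section

/-- Functions of `(t, x, y, w)` (or `(t, x, y, z)`). -/
abbrev R4 := ℝ → ℝ → ℝ → ℝ → ℝ

def d4T (F : R4) : R4 := fun t x y w => deriv (fun s => F s x y w) t
def d4X (F : R4) : R4 := fun t x y w => deriv (fun u => F t u y w) x
def d4Y (F : R4) : R4 := fun t x y w => deriv (fun u => F t x u w) y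
def d4W (F : R4) : R4 := fun t x y w => deriv (fun u => F t x y u) w

/-- Partial derivative in the time variable of `V⁰(t, w)`. -/
def dT2 (f : ℝ → ℝ → ℝ) : ℝ → ℝ → ℝ := fun t w => deriv (fun s => f s w) t

/-- Partial derivative in the wealth variable of `V⁰(t, w)`. -/
def dW2 (f : ℝ → ℝ → ℝ) : ℝ → ℝ → ℝ := fun t w => deriv (fun v => f t v) w

open Set Filter

lemma le_coe_top_aux {n : ℕ∞} : ((n : WithTop ℕ∞)) ≤ ((⊤:ℕ∞) : WithTop ℕ∞) :=
  WithTop.coe_le_coe.2 le_top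

lemma one_le_top' : (1 : WithTop ℕ∞) ≤ ((⊤:ℕ∞) : WithTop ℕ∞) := by exact_mod_cast le_top

lemma top_add_one_le : ((⊤:ℕ∞) : WithTop ℕ∞) + 1 ≤ ((⊤:ℕ∞) : WithTop ℕ∞) := by
  exact_mod_cast (by simp : ((⊤:ℕ∞) + 1 : ℕ∞) ≤ ⊤)

variable {F' : Type*} [NormedAddCommGroup F'] [NormedSpace ℝ F']

lemma hasDerivAt_snd_slice {f : ℝ × ℝ → F'} {p : ℝ × ℝ} (hf : DifferentiableAt ℝ f p) :
    HasDerivAt (fun y => f (p.1, y)) (fderiv ℝ f p (0, 1)) p.2 := by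
  have hc : HasDerivAt (fun y : ℝ => ((p.1, y) : ℝ × ℝ)) ((0 : ℝ), (1 : ℝ)) p.2 :=
    (hasDerivAt_const p.2 p.1).prodMk (hasDerivAt_id p.2)
  simpa [Function.comp_def] using (hf.hasFDerivAt.comp_hasDerivAt p.2 hc)

lemma hasDerivAt_fst_slice {f : ℝ × ℝ → F'} {p : ℝ × ℝ} (hf : DifferentiableAt ℝ f p) :
    HasDerivAt (fun x => f (x, p.2)) (fderiv ℝ f p (1, 0)) p.1 := by
  have hc : HasDerivAt (fun x : ℝ => ((x, p.2) : ℝ × ℝ)) ((1 : ℝ), (0 : ℝ)) p.1 :=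
    (hasDerivAt_id p.1).prodMk (hasDerivAt_const p.1 p.2)
  simpa [Function.comp_def] using (hf.hasFDerivAt.comp_hasDerivAt p.1 hc)

/-- The partial derivative in the second variable, as a function of both variables,
is smooth on an open set where `f` is smooth. -/
lemma contDiffAt_pd2 {f : ℝ × ℝ → ℝ} {s : Set (ℝ × ℝ)} (hs : IsOpen s)
    (hf : ContDiffOn ℝ (⊤ : ℕ∞) f s) {p : ℝ × ℝ} (hp : p ∈ s) :
    ContDiffAt ℝ (⊤ : ℕ∞) (fun q : ℝ × ℝ => deriv (fun y => f (q.1, y)) q.2) p := by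
  have h1 : ContDiffAt ℝ (⊤ : ℕ∞) (fun q : ℝ × ℝ => fderiv ℝ f q (0, 1)) p := by
    have hfd : ContDiffAt ℝ (⊤ : ℕ∞) (fderiv ℝ f) p :=
      (hf.contDiffAt (hs.mem_nhds hp)).fderiv_right top_add_one_le
    exact (ContinuousLinearMap.apply ℝ ℝ ((0 : ℝ), (1 : ℝ))).contDiff.contDiffAt.comp p hfd
  apply h1.congr_of_eventuallyEq
  filter_upwards [hs.mem_nhds hp] with q hq
  have : DifferentiableAt ℝ f q :=
    (hf.contDiffAt (hs.mem_nhds hq)).differentiableAt (by simp)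
  rw [show q = (q.1, q.2) from rfl] at this ⊢
  exact (hasDerivAt_snd_slice this).deriv

lemma contDiffAt_pd1 {f : ℝ × ℝ → ℝ} {s : Set (ℝ × ℝ)} (hs : IsOpen s)
    (hf : ContDiffOn ℝ (⊤ : ℕ∞) f s) {p : ℝ × ℝ} (hp : p ∈ s) :
    ContDiffAt ℝ (⊤ : ℕ∞) (fun q : ℝ × ℝ => deriv (fun x => f (x, q.2)) q.1) p := by
  have h1 : ContDiffAt ℝ (⊤ : ℕ∞) (fun q : ℝ × ℝ => fderiv ℝ f q (1, 0)) p := by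
    have hfd : ContDiffAt ℝ (⊤ : ℕ∞) (fderiv ℝ f) p :=
      (hf.contDiffAt (hs.mem_nhds hp)).fderiv_right top_add_one_le
    exact (ContinuousLinearMap.apply ℝ ℝ ((1 : ℝ), (0 : ℝ))).contDiff.contDiffAt.comp p hfd
  apply h1.congr_of_eventuallyEq
  filter_upwards [hs.mem_nhds hp] with q hq
  have : DifferentiableAt ℝ f q :=
    (hf.contDiffAt (hs.mem_nhds hq)).differentiableAt (by simp)
  rw [show q = (q.1, q.2) from rfl] at this ⊢
  exact (hasDerivAt_fst_slice this).deriv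

/-- Clairaut's theorem for smooth functions on an open subset of `ℝ × ℝ`. -/
lemma clairaut {f : ℝ × ℝ → ℝ} {s : Set (ℝ × ℝ)} (hs : IsOpen s)
    (hf : ContDiffOn ℝ (⊤ : ℕ∞) f s) {a b : ℝ} (hab : (a, b) ∈ s) :
    deriv (fun x => deriv (fun y => f (x, y)) b) a
      = deriv (fun y => deriv (fun x => f (x, y)) a) b := by
  set G := fderiv ℝ f with hG
  have hfc : ContDiffAt ℝ (⊤ : ℕ∞) f (a, b) := hf.contDiffAt (hs.mem_nhds hab)
  have hsymm := hfc.isSymmSndFDerivAt (by have := le_coe_top_aux (n := 2); convert this using 2; simp)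
  have hGd : DifferentiableAt ℝ G (a, b) :=
    (hfc.fderiv_right (m := 1)
      (by have := le_coe_top_aux (n := 2); convert this using 2; norm_num)).differentiableAt (by simp)
  have hL : deriv (fun x => deriv (fun y => f (x, y)) b) a = fderiv ℝ G (a, b) (1, 0) (0, 1) := by
    have hev : (fun x => deriv (fun y => f (x, y)) b) =ᶠ[nhds a] fun x => G (x, b) (0, 1) := by
      have : ∀ᶠ x in nhds a, (x, b) ∈ s :=
        (Continuous.prodMk continuous_id continuous_const).continuousAt.preimage_mem_nhds
          (hs.mem_nhds hab)
      filter_upwards [this] with x hx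
      have : DifferentiableAt ℝ f (x, b) :=
        (hf.contDiffAt (hs.mem_nhds hx)).differentiableAt (by simp)
      exact (hasDerivAt_snd_slice this).deriv
    rw [hev.deriv_eq]
    have h1 : HasDerivAt (fun x => G (x, b)) (fderiv ℝ G (a, b) (1, 0)) a :=
      hasDerivAt_fst_slice (f := G) hGd
    exact (((ContinuousLinearMap.apply ℝ ℝ ((0:ℝ),(1:ℝ))).hasFDerivAt.comp_hasDerivAt a h1)).deriv
  have hR : deriv (fun y => deriv (fun x => f (x, y)) a) b = fderiv ℝ G (a, b) (0, 1) (1, 0) := by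
    have hev : (fun y => deriv (fun x => f (x, y)) a) =ᶠ[nhds b] fun y => G (a, y) (1, 0) := by
      have : ∀ᶠ y in nhds b, (a, y) ∈ s :=
        (Continuous.prodMk continuous_const continuous_id).continuousAt.preimage_mem_nhds
          (hs.mem_nhds hab)
      filter_upwards [this] with y hy
      have : DifferentiableAt ℝ f (a, y) :=
        (hf.contDiffAt (hs.mem_nhds hy)).differentiableAt (by simp)
      exact (hasDerivAt_fst_slice this).deriv
    rw [hev.deriv_eq]
    have h1 : HasDerivAt (fun y => G (a, y)) (fderiv ℝ G (a, b) (0, 1)) b :=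
      hasDerivAt_snd_slice (f := G) hGd
    exact (((ContinuousLinearMap.apply ℝ ℝ ((1:ℝ),(0:ℝ))).hasFDerivAt.comp_hasDerivAt b h1)).deriv
  rw [hL, hR, hsymm (1,0) (0,1)]

/-- Change of variables `z(t,w) = -log ∂_w V⁰ + (1/2)λ₀²(T-t)` transforms the operator
`∂_t + 𝒜₀ + ℬ₀` (acting on `V̂(t,x,y,w) = q(t,x,y,z(t,w))`) into the constant-coefficient
operator `∂_t + 𝒜₀ + 𝒞₀` acting on `q`. -/
theorem change_of_variables_constant_coefficients
    (T σ0 β0 μ0 c0 lam0 ρ b0 : ℝ)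
    (hσ0 : 0 < σ0) (hρ : ρ ∈ Set.Ioo (-1 : ℝ) 1)
    (hb0 : b0 = μ0 - σ0^2/2)
    (V0 : ℝ → ℝ → ℝ)
    (hV0 : ContDiffOn ℝ (⊤ : ℕ∞) (fun p : ℝ × ℝ => V0 p.1 p.2)
      (Set.Iic T ×ˢ Set.Ioi (0:ℝ)))
    (hpos : ∀ t ≤ T, ∀ w > (0:ℝ), 0 < dW2 V0 t w)
    (hneg : ∀ t ≤ T, ∀ w > (0:ℝ), dW2 (dW2 V0) t w < 0)
    (hHJB : ∀ t < T, ∀ w > (0:ℝ),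
      dT2 V0 t w - (1/2) * lam0^2 * (dW2 V0 t w)^2 / dW2 (dW2 V0) t w = 0)
    (R : ℝ → ℝ → ℝ)
    (hR : ∀ t w, R t w = -(dW2 V0 t w) / dW2 (dW2 V0) t w)
    (z : ℝ → ℝ → ℝ)
    (hz : ∀ t w, z t w = -Real.log (dW2 V0 t w) + (1/2) * lam0^2 * (T - t))
    (q : R4)
    (hq : ContDiff ℝ (⊤ : ℕ∞) (fun p : ℝ × ℝ × ℝ × ℝ => q p.1 p.2.1 p.2.2.1 p.2.2.2))
    (Vhat : R4)
    (hVhat : ∀ t x y w, Vhat t x y w = q t x y (z t w)) :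
    ∀ t < T, ∀ (x y : ℝ), ∀ w > (0:ℝ),
      d4T Vhat t x y w
        + ((1/2) * σ0^2 * d4X (d4X Vhat) t x y w
            + ρ * σ0 * β0 * d4X (d4Y Vhat) t x y w
            + (1/2) * β0^2 * d4Y (d4Y Vhat) t x y w
            + b0 * d4X Vhat t x y w
            + c0 * d4Y Vhat t x y w)
        + ((1/2) * lam0^2 * (R t w)^2 * d4W (d4W Vhat) t x y w
            + lam0^2 * R t w * d4W Vhat t x y w
            + ρ * β0 * lam0 * R t w * d4W (d4Y Vhat) t x y w
            + μ0 * R t w * d4W (d4X Vhat) t x y w)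
      = d4T q t x y (z t w)
        + ((1/2) * σ0^2 * d4X (d4X q) t x y (z t w)
            + ρ * σ0 * β0 * d4X (d4Y q) t x y (z t w)
            + (1/2) * β0^2 * d4Y (d4Y q) t x y (z t w)
            + b0 * d4X q t x y (z t w)
            + c0 * d4Y q t x y (z t w))
        + ((1/2) * lam0^2 * d4W (d4W q) t x y (z t w)
            + ρ * β0 * lam0 * d4Y (d4W q) t x y (z t w)
            + μ0 * d4X (d4W q) t x y (z t w)) := by
  intro t ht x y w hw
  have hPpos : 0 < dW2 V0 t w := hpos t ht.le w hw
  have hP2neg : dW2 (dW2 V0) t w < 0 := hneg t ht.le w hw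
  have hPne : dW2 V0 t w ≠ 0 := ne_of_gt hPpos
  have hP2ne : dW2 (dW2 V0) t w ≠ 0 := ne_of_lt hP2neg
  -- open set of interest
  have hUopen : IsOpen (Set.Iio T ×ˢ Set.Ioi (0:ℝ)) := isOpen_Iio.prod isOpen_Ioi
  have hFU : ContDiffOn ℝ (⊤ : ℕ∞) (fun p : ℝ × ℝ => V0 p.1 p.2)
      (Set.Iio T ×ˢ Set.Ioi (0:ℝ)) :=
    hV0.mono (Set.prod_mono Set.Iio_subset_Iic_self subset_rfl)
  have htw : ((t, w) : ℝ × ℝ) ∈ Set.Iio T ×ˢ Set.Ioi (0:ℝ) := ⟨ht, hw⟩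
  -- 1D slice in w
  have hg : ContDiffOn ℝ (⊤ : ℕ∞) (fun v => V0 t v) (Set.Ioi (0:ℝ)) := by
    have := hV0.comp ((contDiff_const.prodMk contDiff_id).contDiffOn
      (s := Set.Ioi (0:ℝ))) (fun v hv => ⟨ht.le, hv⟩)
    exact this
  have hg1 : ContDiffOn ℝ (⊤ : ℕ∞) (fun v => dW2 V0 t v) (Set.Ioi (0:ℝ)) := by
    have := hg.deriv_of_isOpen isOpen_Ioi top_add_one_le
    exact this
  have hg2 : ContDiffOn ℝ (⊤ : ℕ∞) (fun v => dW2 (dW2 V0) t v) (Set.Ioi (0:ℝ)) := by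
    have := hg1.deriv_of_isOpen isOpen_Ioi top_add_one_le
    exact this
  have hder1 : ∀ v ∈ Set.Ioi (0:ℝ), HasDerivAt (fun u => V0 t u) (dW2 V0 t v) v := by
    intro v hv
    exact ((hg.contDiffAt (isOpen_Ioi.mem_nhds hv)).differentiableAt
      (by simp)).hasDerivAt
  have hder2 : ∀ v ∈ Set.Ioi (0:ℝ), HasDerivAt (fun u => dW2 V0 t u) (dW2 (dW2 V0) t v) v := by
    intro v hv
    exact ((hg1.contDiffAt (isOpen_Ioi.mem_nhds hv)).differentiableAt
      (by simp)).hasDerivAt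
  have hder3 : HasDerivAt (fun u => dW2 (dW2 V0) t u) (dW2 (dW2 (dW2 V0)) t w) w :=
    ((hg2.contDiffAt (isOpen_Ioi.mem_nhds hw)).differentiableAt
      (by simp)).hasDerivAt
  -- derivative of z in w
  have hzw : ∀ v ∈ Set.Ioi (0:ℝ),
      HasDerivAt (fun u => z t u) (-(dW2 (dW2 V0) t v) / dW2 V0 t v) v := by
    intro v hv
    have h1 : HasDerivAt (fun u => Real.log (dW2 V0 t u))
        (dW2 (dW2 V0) t v / dW2 V0 t v) v :=
      (hder2 v hv).log (ne_of_gt (hpos t ht.le v hv))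
    have h2 := (h1.neg).add_const ((1/2) * lam0^2 * (T - t))
    have he : (fun u => z t u) = fun u => -Real.log (dW2 V0 t u) + (1/2)*lam0^2*(T-t) :=
      funext fun u => hz t u
    rw [he]
    exact h2.congr_deriv (by ring)
  -- second derivative of z in w
  have hzww : HasDerivAt (fun v => -(dW2 (dW2 V0) t v) / dW2 V0 t v)
      ((-(dW2 (dW2 (dW2 V0)) t w) * dW2 V0 t w - -(dW2 (dW2 V0) t w) * dW2 (dW2 V0) t w)
        / (dW2 V0 t w)^2) w :=
    (hder3.neg).div (hder2 w hw) hPne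
  -- joint smoothness of ∂_w V0, time derivative of ∂_w V0
  have hpfun : ContDiffAt ℝ (⊤ : ℕ∞) (fun pr : ℝ × ℝ => dW2 V0 pr.1 pr.2) (t, w) := by
    have := contDiffAt_pd2 hUopen hFU htw
    simpa [dW2] using this
  have hpt : HasDerivAt (fun s => dW2 V0 s w) (dT2 (dW2 V0) t w) t := by
    have h2 : DifferentiableAt ℝ (fun pr : ℝ × ℝ => dW2 V0 pr.1 pr.2) (t, w) :=
      hpfun.differentiableAt (by simp)
    have hd : DifferentiableAt ℝ (fun s => dW2 V0 s w) t := by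
      simpa [Function.comp_def] using h2.comp t ((hasDerivAt_id t).prodMk (hasDerivAt_const t w)).differentiableAt
    exact hd.hasDerivAt
  -- derivative of z in t
  have hzt : HasDerivAt (fun s => z s w)
      (-(dT2 (dW2 V0) t w / dW2 V0 t w) - (1/2)*lam0^2) t := by
    have h1 := (hpt.log hPne).neg
    have h2 : HasDerivAt (fun s => (1/2)*lam0^2*(T-s)) ((1/2)*lam0^2 * (-1)) t := by
      have := ((hasDerivAt_id t).const_sub T).const_mul ((1/2)*lam0^2)
      simpa using this
    have h3 := h1.add h2
    have he : (fun s => z s w) = fun s => -Real.log (dW2 V0 s w) + (1/2)*lam0^2*(T-s) :=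
      funext fun s => hz s w
    rw [he]
    exact h3.congr_deriv (by ring)
  -- Clairaut for V0
  have hcl : dT2 (dW2 V0) t w = deriv (fun v => dT2 V0 t v) w := by
    have := clairaut hUopen hFU htw
    simpa [dT2, dW2] using this
  -- value of the mixed derivative via the HJB equation
  have hDT : dT2 (dW2 V0) t w =
      ((1/2)*lam0^2 * ((2:ℕ) * dW2 V0 t w ^ (2-1) * dW2 (dW2 V0) t w) * dW2 (dW2 V0) t w
        - (1/2)*lam0^2 * dW2 V0 t w ^ 2 * dW2 (dW2 (dW2 V0)) t w)
        / dW2 (dW2 V0) t w ^ 2 := by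
    rw [hcl]
    have hev : (fun v => dT2 V0 t v) =ᶠ[nhds w]
        (fun v => (1/2)*lam0^2 * dW2 V0 t v ^ 2 / dW2 (dW2 V0) t v) := by
      have hwT : ∀ᶠ v in nhds w, v ∈ Set.Ioi (0:ℝ) := isOpen_Ioi.mem_nhds hw
      filter_upwards [hwT] with v hv
      have h := hHJB t ht v hv
      have hne : dW2 (dW2 V0) t v ≠ 0 := ne_of_lt (hneg t ht.le v hv)
      have := sub_eq_zero.mp h
      linarith
    rw [hev.deriv_eq]
    exact ((((hder2 w hw).pow 2).const_mul ((1/2)*lam0^2)).div hder3 hP2ne).deriv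
  -- q-side slice functions
  have hQz : ContDiff ℝ (⊤ : ℕ∞) (fun ζ => q t x y ζ) :=
    hq.comp (contDiff_const.prodMk (contDiff_const.prodMk (contDiff_const.prodMk contDiff_id)))
  have hQz1 : ∀ ζ : ℝ, HasDerivAt (fun u => q t x y u) (d4W q t x y ζ) ζ := fun ζ =>
    ((hQz.differentiable (by simp)) ζ).hasDerivAt
  have hQzd : ContDiff ℝ (⊤ : ℕ∞) (fun ζ => d4W q t x y ζ) := by
    have := (contDiffOn_univ.2 hQz).deriv_of_isOpen isOpen_univ top_add_one_le
    exact contDiffOn_univ.1 this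
  have hQz2 : HasDerivAt (fun ζ => d4W q t x y ζ) (d4W (d4W q) t x y (z t w)) (z t w) :=
    ((hQzd.differentiable (by simp)) (z t w)).hasDerivAt
  -- mixed q derivatives: y-z
  have hf_yz : ContDiff ℝ (⊤ : ℕ∞) (fun pr : ℝ × ℝ => q t x pr.1 pr.2) :=
    hq.comp (contDiff_const.prodMk (contDiff_const.prodMk (contDiff_fst.prodMk contDiff_snd)))
  have hAd : HasDerivAt (fun ζ => d4Y q t x y ζ) (d4W (d4Y q) t x y (z t w)) (z t w) := by
    have h1 := contDiffAt_pd1 isOpen_univ hf_yz.contDiffOn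
      (Set.mem_univ ((y, z t w) : ℝ × ℝ))
    have h3 := (h1.differentiableAt (by simp)).comp (z t w)
      ((differentiableAt_const y).prodMk differentiableAt_id)
    have h2 : DifferentiableAt ℝ (fun ζ => d4Y q t x y ζ) (z t w) := by
      simpa [d4Y, Function.comp_def] using h3
    exact h2.hasDerivAt
  have hQyz : d4Y (d4W q) t x y (z t w) = d4W (d4Y q) t x y (z t w) := by
    have := clairaut isOpen_univ hf_yz.contDiffOn (Set.mem_univ ((y, z t w) : ℝ × ℝ))
    simpa [d4Y, d4W] using this
  -- mixed q derivatives: x-z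
  have hf_xz : ContDiff ℝ (⊤ : ℕ∞) (fun pr : ℝ × ℝ => q t pr.1 y pr.2) :=
    hq.comp (contDiff_const.prodMk (contDiff_fst.prodMk (contDiff_const.prodMk contDiff_snd)))
  have hBd : HasDerivAt (fun ζ => d4X q t x y ζ) (d4W (d4X q) t x y (z t w)) (z t w) := by
    have h1 := contDiffAt_pd1 isOpen_univ hf_xz.contDiffOn
      (Set.mem_univ ((x, z t w) : ℝ × ℝ))
    have h3 := (h1.differentiableAt (by simp)).comp (z t w)
      ((differentiableAt_const x).prodMk differentiableAt_id)
    have h2 : DifferentiableAt ℝ (fun ζ => d4X q t x y ζ) (z t w) := by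
      simpa [d4X, Function.comp_def] using h3
    exact h2.hasDerivAt
  have hQxz : d4X (d4W q) t x y (z t w) = d4W (d4X q) t x y (z t w) := by
    have := clairaut isOpen_univ hf_xz.contDiffOn (Set.mem_univ ((x, z t w) : ℝ × ℝ))
    simpa [d4X, d4W] using this
  -- time derivative of Vhat
  have hh4 : ContDiff ℝ (⊤ : ℕ∞) (fun pr : ℝ × ℝ => q pr.1 x y pr.2) :=
    hq.comp (contDiff_fst.prodMk (contDiff_const.prodMk (contDiff_const.prodMk contDiff_snd)))
  have hT : d4T Vhat t x y w = d4T q t x y (z t w)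
      + d4W q t x y (z t w) * (-(dT2 (dW2 V0) t w / dW2 V0 t w) - (1/2)*lam0^2) := by
    have hcurve : HasDerivAt (fun s => ((s, z s w) : ℝ × ℝ))
        ((1:ℝ), -(dT2 (dW2 V0) t w / dW2 V0 t w) - (1/2)*lam0^2) t :=
      (hasDerivAt_id t).prodMk hzt
    have hdh4 : DifferentiableAt ℝ (fun pr : ℝ × ℝ => q pr.1 x y pr.2) (t, z t w) :=
      (hh4.differentiable (by simp)) _
    have hcomp := hdh4.hasFDerivAt.comp_hasDerivAt t hcurve
    have e2 : fderiv ℝ (fun pr : ℝ × ℝ => q pr.1 x y pr.2) (t, z t w) (1, 0)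
        = d4T q t x y (z t w) := (hasDerivAt_fst_slice hdh4).deriv.symm
    have e3 : fderiv ℝ (fun pr : ℝ × ℝ => q pr.1 x y pr.2) (t, z t w) (0, 1)
        = d4W q t x y (z t w) := (hasDerivAt_snd_slice hdh4).deriv.symm
    have e1 : ((1:ℝ), -(dT2 (dW2 V0) t w / dW2 V0 t w) - (1/2)*lam0^2)
        = ((1:ℝ), (0:ℝ)) + (-(dT2 (dW2 V0) t w / dW2 V0 t w) - (1/2)*lam0^2) • ((0:ℝ), (1:ℝ)) := by
      simp [Prod.ext_iff]
    have he : (fun s => Vhat s x y w) = fun s => q s x y (z s w) :=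
      funext fun s => hVhat s x y w
    have : d4T Vhat t x y w = deriv (fun s => q s x y (z s w)) t := by
      simp only [d4T]; rw [he]
    have hcomp' : HasDerivAt (fun s => q s x y (z s w))
        ((fderiv ℝ (fun pr : ℝ × ℝ => q pr.1 x y pr.2) (t, z t w))
          (1, -(dT2 (dW2 V0) t w / dW2 V0 t w) - (1/2)*lam0^2)) t := by
      simpa [Function.comp_def] using hcomp
    rw [this, hcomp'.deriv, e1, map_add, map_smul, e2, e3]
    simp [smul_eq_mul]
    ring
  -- w derivative of Vhat, as a function on Ioi 0
  have hWfun : ∀ u ∈ Set.Ioi (0:ℝ), d4W Vhat t x y u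
      = d4W q t x y (z t u) * (-(dW2 (dW2 V0) t u) / dW2 V0 t u) := by
    intro u hu
    have hc := (hQz1 (z t u)).comp u (hzw u hu)
    have he : (fun u' => Vhat t x y u') = fun u' => q t x y (z t u') :=
      funext fun u' => hVhat t x y u'
    simp only [d4W]; rw [he]
    simpa [Function.comp_def, d4W] using hc.deriv
  have hW : d4W Vhat t x y w
      = d4W q t x y (z t w) * (-(dW2 (dW2 V0) t w) / dW2 V0 t w) := hWfun w hw
  -- second w derivative of Vhat
  have hWW : d4W (d4W Vhat) t x y w
      = (d4W (d4W q) t x y (z t w) * (-(dW2 (dW2 V0) t w) / dW2 V0 t w))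
          * (-(dW2 (dW2 V0) t w) / dW2 V0 t w)
        + d4W q t x y (z t w)
          * ((-(dW2 (dW2 (dW2 V0)) t w) * dW2 V0 t w - -(dW2 (dW2 V0) t w) * dW2 (dW2 V0) t w)
              / (dW2 V0 t w)^2) := by
    have hev : (fun u => d4W Vhat t x y u) =ᶠ[nhds w]
        (fun u => d4W q t x y (z t u) * (-(dW2 (dW2 V0) t u) / dW2 V0 t u)) := by
      filter_upwards [isOpen_Ioi.mem_nhds hw] with u hu using hWfun u hu
    have h1 : HasDerivAt (fun u => d4W q t x y (z t u))
        (d4W (d4W q) t x y (z t w) * (-(dW2 (dW2 V0) t w) / dW2 V0 t w)) w := by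
      have := hQz2.comp w (hzw w hw)
      simpa [Function.comp_def] using this
    have h2 := h1.mul hzww
    show deriv (fun u => d4W Vhat t x y u) w = _
    rw [hev.deriv_eq]
    exact h2.deriv
  -- mixed w-y derivative of Vhat
  have hYall : ∀ t' x' y' w', d4Y Vhat t' x' y' w' = d4Y q t' x' y' (z t' w') := by
    intro t' x' y' w'
    simp only [d4Y]
    congr 1
    funext u
    exact hVhat t' x' u w'
  have hXall : ∀ t' x' y' w', d4X Vhat t' x' y' w' = d4X q t' x' y' (z t' w') := by
    intro t' x' y' w'
    simp only [d4X]
    congr 1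
    funext u
    exact hVhat t' u y' w'
  have hWY : d4W (d4Y Vhat) t x y w
      = d4W (d4Y q) t x y (z t w) * (-(dW2 (dW2 V0) t w) / dW2 V0 t w) := by
    have he : (fun u => d4Y Vhat t x y u) = fun u => d4Y q t x y (z t u) :=
      funext fun u => hYall t x y u
    show deriv (fun u => d4Y Vhat t x y u) w = _
    rw [he]
    have := hAd.comp w (hzw w hw)
    simpa [Function.comp_def] using this.deriv
  have hWX : d4W (d4X Vhat) t x y w
      = d4W (d4X q) t x y (z t w) * (-(dW2 (dW2 V0) t w) / dW2 V0 t w) := by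
    have he : (fun u => d4X Vhat t x y u) = fun u => d4X q t x y (z t u) :=
      funext fun u => hXall t x y u
    show deriv (fun u => d4X Vhat t x y u) w = _
    rw [he]
    have := hBd.comp w (hzw w hw)
    simpa [Function.comp_def] using this.deriv
  -- pure x,y derivatives
  have hXe : d4X Vhat t x y w = d4X q t x y (z t w) := hXall t x y w
  have hYe : d4Y Vhat t x y w = d4Y q t x y (z t w) := hYall t x y w
  have hXX : d4X (d4X Vhat) t x y w = d4X (d4X q) t x y (z t w) := by
    show deriv (fun u => d4X Vhat t u y w) x = _
    rw [funext fun u => hXall t u y w]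
    rfl
  have hXY : d4X (d4Y Vhat) t x y w = d4X (d4Y q) t x y (z t w) := by
    show deriv (fun u => d4Y Vhat t u y w) x = _
    rw [funext fun u => hYall t u y w]
    rfl
  have hYY : d4Y (d4Y Vhat) t x y w = d4Y (d4Y q) t x y (z t w) := by
    show deriv (fun u => d4Y Vhat t x u w) y = _
    rw [funext fun u => hYall t x u w]
    rfl
  -- assemble
  rw [hT, hXX, hXY, hYY, hXe, hYe, hWW, hW, hWY, hWX, hQyz, hQxz, hR t w, hDT]
  have h2ne : dW2 V0 t w ^ 2 ≠ 0 := pow_ne_zero 2 hPne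
  field_simp
  ring
end
end

section
/- Let constants σ₀ > 0, β₀, μ₀, c₀, λ₀, λ₁₀, λ₀₁, ρ ∈ (-1,1), x̄, ȳ, T be given, and let V⁽⁰⁾(t, w) be a smooth solution on (-∞, T] × (0, ∞) of ∂_t V⁽⁰⁾ - (1/2) λ₀² (∂_w V⁽⁰⁾)²/(∂_w² V⁽⁰⁾) = 0 with ∂_w V⁽⁰⁾ > 0 and ∂_w² V⁽⁰⁾ < 0, with risk tolerance R := -∂_w V⁽⁰⁾/∂_w² V⁽⁰⁾ and D_k := R^k ∂_w^k. Define A(t, x, y) := λ₁₀ [(x - x̄) + (1/2)(T - t)(μ₀ - σ₀²/2)] + λ₀₁ [(y - ȳ) + (1/2)(T - t) c₀] and B := λ₁₀ μ₀ + λ₀₁ ρβ₀λ₀. Then the function V⁽¹⁾(t, x, y, w) := (T - t) λ₀ A(t, x, y) D₁V⁽⁰⁾(t, w) + (1/2)(T - t)² λ₀ B D₁²V⁽⁰⁾(t, w) satisfies (∂_t + 𝒜₀ + ℬ₀) V⁽¹⁾ + [λ₀λ₁₀(x - x̄) + λ₀λ₀₁(y - ȳ)] D₁V⁽⁰⁾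 = 0 with V⁽¹⁾(T, x, y, w) = 0, where 𝒜₀ := (1/2)σ₀² ∂_x² + ρσ₀β₀ ∂_x∂_y + (1/2)β₀² ∂_y² + (μ₀ - σ₀²/2) ∂_x + c₀ ∂_y and ℬ₀ := (1/2)λ₀² R² ∂_w² + λ₀² R ∂_w + ρβ₀λ₀ R ∂_w∂_y + μ₀ R ∂_w∂_x. -/
noncomputable section

section AuxCalc

variable {G : ℝ × ℝ → ℝ} {s u : ℝ}

lemma hasDerivAt_sliceW (h : DifferentiableAt ℝ G (s,u)) :
    HasDerivAt (fun v => G (s,v)) (fderiv ℝ G (s,u) (0,1)) u := by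
  have hline : HasDerivAt (fun v : ℝ => ((s,v) : ℝ×ℝ)) ((0:ℝ),(1:ℝ)) u :=
    (hasDerivAt_const u s).prodMk (hasDerivAt_id u)
  exact h.hasFDerivAt.comp_hasDerivAt u hline

lemma hasDerivAt_sliceT (h : DifferentiableAt ℝ G (s,u)) :
    HasDerivAt (fun r => G (r,u)) (fderiv ℝ G (s,u) (1,0)) s := by
  have hline : HasDerivAt (fun r : ℝ => ((r,u) : ℝ×ℝ)) ((1:ℝ),(0:ℝ)) s :=
    (hasDerivAt_id s).prodMk (hasDerivAt_const s u)
  exact h.hasFDerivAt.comp_hasDerivAt s hline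

lemma contDiffAt_pdW {q : ℝ×ℝ} (h : ContDiffAt ℝ (⊤:ℕ∞) G q) :
    ContDiffAt ℝ (⊤:ℕ∞) (fun p => fderiv ℝ G p (0,1)) q :=
  (h.fderiv_right (by simp)).clm_apply contDiffAt_const


lemma hasDerivAt_const_add_mul (cst m z : ℝ) : HasDerivAt (fun x => cst + m*x) m z := by
  simpa using ((hasDerivAt_id z).const_mul m).const_add cst

lemma deriv_const_add_mul (cst m z : ℝ) : deriv (fun x => cst + m*x) z = m :=
  (hasDerivAt_const_add_mul cst m z).deriv

lemma contDiffAt_pdT {q : ℝ×ℝ} (h : ContDiffAt ℝ (⊤:ℕ∞) G q) :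
    ContDiffAt ℝ (⊤:ℕ∞) (fun p => fderiv ℝ G p (1,0)) q :=
  (h.fderiv_right (by simp)).clm_apply contDiffAt_const

lemma fderiv_swap_dir {q : ℝ×ℝ} (h : ContDiffAt ℝ (⊤:ℕ∞) G q) (v v' : ℝ×ℝ) :
    fderiv ℝ (fun p => fderiv ℝ G p v) q v' = fderiv ℝ (fun p => fderiv ℝ G p v') q v := by
  have hd : DifferentiableAt ℝ (fderiv ℝ G) q :=
    (h.fderiv_right (m := 1) (WithTop.coe_le_coe.2 le_top)).differentiableAt one_ne_zero
  have key : ∀ z z' : ℝ×ℝ, fderiv ℝ (fun p => fderiv ℝ G p z) q z'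
      = fderiv ℝ (fderiv ℝ G) q z' z := by
    intro z z'
    have hc := hd.hasFDerivAt.clm_apply (hasFDerivAt_const z q)
    rw [hc.fderiv]
    simp
  rw [key v v', key v' v]
  exact (h.isSymmSndFDerivAt (by rw [minSmoothness_of_isRCLikeNormedField]; exact WithTop.coe_le_coe.2 le_top)).eq v' v

end AuxCalc

set_option maxHeartbeats 4000000 in
/-- The explicit first-order value function correction
`V¹ = (T-t)λ₀ A D₁V⁰ + (1/2)(T-t)² λ₀ B D₁²V⁰` solves
`(∂_t + 𝒜₀ + ℬ₀) V¹ + (½λ²)₁ D₁V⁰ = 0` with `V¹(T,·) = 0`. -/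
theorem first_order_value_function_correction
    (T σ0 β0 μ0 c0 lam0 lam10 lam01 ρ xbar ybar : ℝ)
    (hσ0 : 0 < σ0) (hρ : ρ ∈ Set.Ioo (-1 : ℝ) 1)
    (V0 : ℝ → ℝ → ℝ)
    (hV0 : ContDiffOn ℝ (⊤ : ℕ∞) (fun p : ℝ × ℝ => V0 p.1 p.2)
      (Set.Iic T ×ˢ Set.Ioi (0:ℝ)))
    (hpos : ∀ t ≤ T, ∀ w > (0:ℝ), 0 < dW2 V0 t w)
    (hneg : ∀ t ≤ T, ∀ w > (0:ℝ), dW2 (dW2 V0) t w < 0)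
    (hHJB : ∀ t < T, ∀ w > (0:ℝ),
      dT2 V0 t w - (1/2) * lam0^2 * (dW2 V0 t w)^2 / dW2 (dW2 V0) t w = 0)
    (R : ℝ → ℝ → ℝ)
    (hR : ∀ t w, R t w = -(dW2 V0 t w) / dW2 (dW2 V0) t w)
    (D1V0 : ℝ → ℝ → ℝ)
    (hD1V0 : ∀ t w, D1V0 t w = R t w * dW2 V0 t w)
    (D1sqV0 : ℝ → ℝ → ℝ)
    (hD1sqV0 : ∀ t w, D1sqV0 t w = R t w * dW2 D1V0 t w)
    (A : ℝ → ℝ → ℝ → ℝ)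
    (hA : ∀ t x y, A t x y =
      lam10 * ((x - xbar) + (1/2) * (T - t) * (μ0 - σ0^2/2))
      + lam01 * ((y - ybar) + (1/2) * (T - t) * c0))
    (B : ℝ) (hB : B = lam10 * μ0 + lam01 * ρ * β0 * lam0)
    (V1 : R4)
    (hV1 : ∀ t x y w, V1 t x y w =
      (T - t) * lam0 * A t x y * D1V0 t w
      + (1/2) * (T - t)^2 * lam0 * B * D1sqV0 t w) :
    (∀ t < T, ∀ (x y : ℝ), ∀ w > (0:ℝ),
      d4T V1 t x y w
        + ((1/2) * σ0^2 * d4X (d4X V1) t x y w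
            + ρ * σ0 * β0 * d4X (d4Y V1) t x y w
            + (1/2) * β0^2 * d4Y (d4Y V1) t x y w
            + (μ0 - σ0^2/2) * d4X V1 t x y w
            + c0 * d4Y V1 t x y w)
        + ((1/2) * lam0^2 * (R t w)^2 * d4W (d4W V1) t x y w
            + lam0^2 * R t w * d4W V1 t x y w
            + ρ * β0 * lam0 * R t w * d4W (d4Y V1) t x y w
            + μ0 * R t w * d4W (d4X V1) t x y w)
        + (lam0 * lam10 * (x - xbar) + lam0 * lam01 * (y - ybar)) * D1V0 t w
      = 0) ∧
    (∀ (x y : ℝ), ∀ w > (0:ℝ), V1 T x y w = 0) := by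
  constructor
  · intro t ht x y w hw
    have hUopen : IsOpen (Set.Iio T ×ˢ Set.Ioi (0:ℝ)) := isOpen_Iio.prod isOpen_Ioi
    have hUsub : (Set.Iio T ×ˢ Set.Ioi (0:ℝ)) ⊆ Set.Iic T ×ˢ Set.Ioi (0:ℝ) :=
      Set.prod_mono Set.Iio_subset_Iic_self subset_rfl
    have hq : ((t,w) : ℝ×ℝ) ∈ Set.Iio T ×ˢ Set.Ioi (0:ℝ) := ⟨ht, hw⟩
    obtain ⟨F0, hF0⟩ : ∃ F : ℝ×ℝ → ℝ, F = fun p : ℝ×ℝ => V0 p.1 p.2 := ⟨_, rfl⟩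
    obtain ⟨F1, hF1⟩ : ∃ F : ℝ×ℝ → ℝ, F = fun p : ℝ×ℝ => fderiv ℝ F0 p (0,1) := ⟨_, rfl⟩
    obtain ⟨F2, hF2⟩ : ∃ F : ℝ×ℝ → ℝ, F = fun p : ℝ×ℝ => fderiv ℝ F1 p (0,1) := ⟨_, rfl⟩
    obtain ⟨F3, hF3⟩ : ∃ F : ℝ×ℝ → ℝ, F = fun p : ℝ×ℝ => fderiv ℝ F2 p (0,1) := ⟨_, rfl⟩
    obtain ⟨F4, hF4⟩ : ∃ F : ℝ×ℝ → ℝ, F = fun p : ℝ×ℝ => fderiv ℝ F3 p (0,1) := ⟨_, rfl⟩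
    obtain ⟨F5, hF5⟩ : ∃ F : ℝ×ℝ → ℝ, F = fun p : ℝ×ℝ => fderiv ℝ F4 p (0,1) := ⟨_, rfl⟩
    have hone : ((⊤:ℕ∞) : WithTop ℕ∞) ≠ 0 := by simp
    have hC0 : ∀ {s u : ℝ}, (s,u) ∈ Set.Iio T ×ˢ Set.Ioi (0:ℝ) →
        ContDiffAt ℝ (⊤:ℕ∞) F0 (s,u) := by
      intro s u h
      rw [hF0]
      exact hV0.contDiffAt (mem_nhds_iff.2 ⟨_, hUsub, hUopen, h⟩)
    have hC1 : ∀ {s u : ℝ}, (s,u) ∈ Set.Iio T ×ˢ Set.Ioi (0:ℝ) →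
        ContDiffAt ℝ (⊤:ℕ∞) F1 (s,u) := by
      intro s u h; rw [hF1]; exact contDiffAt_pdW (hC0 h)
    have hC2 : ∀ {s u : ℝ}, (s,u) ∈ Set.Iio T ×ˢ Set.Ioi (0:ℝ) →
        ContDiffAt ℝ (⊤:ℕ∞) F2 (s,u) := by
      intro s u h; rw [hF2]; exact contDiffAt_pdW (hC1 h)
    have hC3 : ∀ {s u : ℝ}, (s,u) ∈ Set.Iio T ×ˢ Set.Ioi (0:ℝ) →
        ContDiffAt ℝ (⊤:ℕ∞) F3 (s,u) := by
      intro s u h; rw [hF3]; exact contDiffAt_pdW (hC2 h)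
    have hC4 : ∀ {s u : ℝ}, (s,u) ∈ Set.Iio T ×ˢ Set.Ioi (0:ℝ) →
        ContDiffAt ℝ (⊤:ℕ∞) F4 (s,u) := by
      intro s u h; rw [hF4]; exact contDiffAt_pdW (hC3 h)
    have hd0 : ∀ s u : ℝ, (s,u) ∈ Set.Iio T ×ˢ Set.Ioi (0:ℝ) →
        HasDerivAt (fun v => F0 (s,v)) (F1 (s,u)) u := by
      intro s u h; rw [hF1]; exact hasDerivAt_sliceW ((hC0 h).differentiableAt hone)
    have hd1 : ∀ s u : ℝ, (s,u) ∈ Set.Iio T ×ˢ Set.Ioi (0:ℝ) →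
        HasDerivAt (fun v => F1 (s,v)) (F2 (s,u)) u := by
      intro s u h; rw [hF2]; exact hasDerivAt_sliceW ((hC1 h).differentiableAt hone)
    have hd2 : ∀ s u : ℝ, (s,u) ∈ Set.Iio T ×ˢ Set.Ioi (0:ℝ) →
        HasDerivAt (fun v => F2 (s,v)) (F3 (s,u)) u := by
      intro s u h; rw [hF3]; exact hasDerivAt_sliceW ((hC2 h).differentiableAt hone)
    have hd3 : ∀ s u : ℝ, (s,u) ∈ Set.Iio T ×ˢ Set.Ioi (0:ℝ) →
        HasDerivAt (fun v => F3 (s,v)) (F4 (s,u)) u := by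
      intro s u h; rw [hF4]; exact hasDerivAt_sliceW ((hC3 h).differentiableAt hone)
    have hd4 : ∀ s u : ℝ, (s,u) ∈ Set.Iio T ×ˢ Set.Ioi (0:ℝ) →
        HasDerivAt (fun v => F4 (s,v)) (F5 (s,u)) u := by
      intro s u h; rw [hF5]; exact hasDerivAt_sliceW ((hC4 h).differentiableAt hone)
    have hevW : ∀ s u : ℝ, (s,u) ∈ Set.Iio T ×ˢ Set.Ioi (0:ℝ) →
        ∀ᶠ v in nhds u, (s,v) ∈ Set.Iio T ×ˢ Set.Ioi (0:ℝ) := by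
      intro s u h
      have ho : IsOpen ((fun v : ℝ => ((s,v) : ℝ×ℝ)) ⁻¹' (Set.Iio T ×ˢ Set.Ioi (0:ℝ))) :=
        hUopen.preimage (continuous_const.prodMk continuous_id)
      exact ho.eventually_mem h
    have hevT : ∀ s u : ℝ, (s,u) ∈ Set.Iio T ×ˢ Set.Ioi (0:ℝ) →
        ∀ᶠ r in nhds s, (r,u) ∈ Set.Iio T ×ˢ Set.Ioi (0:ℝ) := by
      intro s u h
      have ho : IsOpen ((fun r : ℝ => ((r,u) : ℝ×ℝ)) ⁻¹' (Set.Iio T ×ˢ Set.Ioi (0:ℝ))) :=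
        hUopen.preimage (continuous_id.prodMk continuous_const)
      exact ho.eventually_mem h
    have hW1 : ∀ s u : ℝ, (s,u) ∈ Set.Iio T ×ˢ Set.Ioi (0:ℝ) → dW2 V0 s u = F1 (s,u) := by
      intro s u h
      have hder := (hd0 s u h).deriv
      rw [hF0] at hder
      simpa [dW2] using hder
    have hW2 : ∀ s u : ℝ, (s,u) ∈ Set.Iio T ×ˢ Set.Ioi (0:ℝ) →
        dW2 (dW2 V0) s u = F2 (s,u) := by
      intro s u h
      have heq : (fun v => dW2 V0 s v) =ᶠ[nhds u] (fun v => F1 (s,v)) := by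
        filter_upwards [hevW s u h] with v hv
        exact hW1 s v hv
      show deriv (fun v => dW2 V0 s v) u = F2 (s,u)
      rw [heq.deriv_eq, (hd1 s u h).deriv]
    have hbne : ∀ s u : ℝ, (s,u) ∈ Set.Iio T ×ˢ Set.Ioi (0:ℝ) → F2 (s,u) ≠ 0 := by
      intro s u h
      have h2 := hneg s (le_of_lt h.1) u h.2
      rw [hW2 s u h] at h2
      exact ne_of_lt h2
    have hG0 : ∀ s u : ℝ, (s,u) ∈ Set.Iio T ×ˢ Set.Ioi (0:ℝ) →
        fderiv ℝ F0 (s,u) (1,0) = (1/2)*lam0^2*F1 (s,u)^2/F2 (s,u) := by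
      intro s u h
      have hh := hHJB s h.1 u h.2
      rw [hW1 s u h, hW2 s u h] at hh
      have hT : dT2 V0 s u = fderiv ℝ F0 (s,u) (1,0) := by
        have hder := (hasDerivAt_sliceT ((hC0 h).differentiableAt hone)).deriv
        rw [hF0] at hder ⊢
        simpa [dT2] using hder
      rw [hT] at hh
      exact sub_eq_zero.1 hh
    have hG1 : ∀ s u : ℝ, (s,u) ∈ Set.Iio T ×ˢ Set.Ioi (0:ℝ) →
        fderiv ℝ F1 (s,u) (1,0) = lam0^2/2*(2*F1 (s,u)*F2 (s,u)^2 - F1 (s,u)^2*F3 (s,u))/F2 (s,u)^2 := by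
      intro s u h
      have hb := hbne s u h
      have e1 : fderiv ℝ (fun p => fderiv ℝ F0 p (0,1)) (s,u) (1,0)
          = fderiv ℝ (fun p => fderiv ℝ F0 p (1,0)) (s,u) (0,1) :=
        fderiv_swap_dir (hC0 h) (0,1) (1,0)
      rw [← hF1] at e1
      have e4 : HasDerivAt (fun v => fderiv ℝ F0 (s,v) (1,0))
          (fderiv ℝ (fun p : ℝ×ℝ => fderiv ℝ F0 p (1,0)) (s,u) (0,1)) u :=
        hasDerivAt_sliceW ((contDiffAt_pdT (hC0 h)).differentiableAt hone)
      have e4' : HasDerivAt (fun v => (1/2)*lam0^2*F1 (s,v)^2/F2 (s,v))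
          (fderiv ℝ (fun p : ℝ×ℝ => fderiv ℝ F0 p (1,0)) (s,u) (0,1)) u := by
        refine e4.congr_of_eventuallyEq ?_
        filter_upwards [hevW s u h] with v hv
        exact (hG0 s v hv).symm
      have e5 : HasDerivAt (fun v => (1/2)*lam0^2*F1 (s,v)^2/F2 (s,v)) (lam0^2/2*(2*F1 (s,u)*F2 (s,u)^2 - F1 (s,u)^2*F3 (s,u))/F2 (s,u)^2) u := by
        have hcomb := (((hd1 s u h).pow 2).const_mul ((1/2)*lam0^2)).div (hd2 s u h) hb
        refine hcomb.congr_deriv ?_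
        simp only [Pi.pow_apply, Pi.mul_apply, Pi.add_apply, Pi.sub_apply, Pi.neg_apply, Pi.div_apply]
        field_simp
        ring
      rw [e1]
      exact e4'.unique e5
    have hG2 : ∀ s u : ℝ, (s,u) ∈ Set.Iio T ×ˢ Set.Ioi (0:ℝ) →
        fderiv ℝ F2 (s,u) (1,0) = lam0^2/2*(2*F2 (s,u)^4 - 2*F1 (s,u)*F2 (s,u)^2*F3 (s,u) - F1 (s,u)^2*F2 (s,u)*F4 (s,u) + 2*F1 (s,u)^2*F3 (s,u)^2)/F2 (s,u)^3 := by
      intro s u h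
      have hb := hbne s u h
      have e1 : fderiv ℝ (fun p => fderiv ℝ F1 p (0,1)) (s,u) (1,0)
          = fderiv ℝ (fun p => fderiv ℝ F1 p (1,0)) (s,u) (0,1) :=
        fderiv_swap_dir (hC1 h) (0,1) (1,0)
      rw [← hF2] at e1
      have e4 : HasDerivAt (fun v => fderiv ℝ F1 (s,v) (1,0))
          (fderiv ℝ (fun p : ℝ×ℝ => fderiv ℝ F1 p (1,0)) (s,u) (0,1)) u :=
        hasDerivAt_sliceW ((contDiffAt_pdT (hC1 h)).differentiableAt hone)
      have e4' : HasDerivAt (fun v => lam0^2/2*(2*F1 (s,v)*F2 (s,v)^2 - F1 (s,v)^2*F3 (s,v))/F2 (s,v)^2)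
          (fderiv ℝ (fun p : ℝ×ℝ => fderiv ℝ F1 p (1,0)) (s,u) (0,1)) u := by
        refine e4.congr_of_eventuallyEq ?_
        filter_upwards [hevW s u h] with v hv
        exact (hG1 s v hv).symm
      have e5 : HasDerivAt (fun v => lam0^2/2*(2*F1 (s,v)*F2 (s,v)^2 - F1 (s,v)^2*F3 (s,v))/F2 (s,v)^2) (lam0^2/2*(2*F2 (s,u)^4 - 2*F1 (s,u)*F2 (s,u)^2*F3 (s,u) - F1 (s,u)^2*F2 (s,u)*F4 (s,u) + 2*F1 (s,u)^2*F3 (s,u)^2)/F2 (s,u)^3) u := by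
        have hcomb := ((((((hd1 s u h).const_mul 2).mul
            ((hd2 s u h).pow 2)).sub (((hd1 s u h).pow 2).mul (hd3 s u h))).const_mul
            (lam0^2/2)).div ((hd2 s u h).pow 2) (pow_ne_zero 2 hb))
        refine hcomb.congr_deriv ?_
        simp only [Pi.pow_apply, Pi.mul_apply, Pi.add_apply, Pi.sub_apply, Pi.neg_apply, Pi.div_apply]
        field_simp
        ring
      rw [e1]
      exact e4'.unique e5
    have hG3 : fderiv ℝ F3 (t,w) (1,0) = lam0^2/2*((6*F2 (t,w)^3*F3 (t,w) - 4*F1 (t,w)*F2 (t,w)^2*F4 (t,w) + 3*F1 (t,w)^2*F3 (t,w)*F4 (t,w) - F1 (t,w)^2*F2 (t,w)*F5 (t,w))*F2 (t,w) - 3*F3 (t,w)*(2*F2 (t,w)^4 - 2*F1 (t,w)*F2 (t,w)^2*F3 (t,w) - F1 (t,w)^2*F2 (t,w)*F4 (t,w) + 2*F1 (t,w)^2*F3 (t,w)^2))/F2 (t,w)^4 := by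
      have hb := hbne t w hq
      have e1 : fderiv ℝ (fun p => fderiv ℝ F2 p (0,1)) (t,w) (1,0)
          = fderiv ℝ (fun p => fderiv ℝ F2 p (1,0)) (t,w) (0,1) :=
        fderiv_swap_dir (hC2 hq) (0,1) (1,0)
      rw [← hF3] at e1
      have e4 : HasDerivAt (fun v => fderiv ℝ F2 (t,v) (1,0))
          (fderiv ℝ (fun p : ℝ×ℝ => fderiv ℝ F2 p (1,0)) (t,w) (0,1)) w :=
        hasDerivAt_sliceW ((contDiffAt_pdT (hC2 hq)).differentiableAt hone)
      have e4' : HasDerivAt (fun v => lam0^2/2*(2*F2 (t,v)^4 - 2*F1 (t,v)*F2 (t,v)^2*F3 (t,v) - F1 (t,v)^2*F2 (t,v)*F4 (t,v) + 2*F1 (t,v)^2*F3 (t,v)^2)/F2 (t,v)^3)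
          (fderiv ℝ (fun p : ℝ×ℝ => fderiv ℝ F2 p (1,0)) (t,w) (0,1)) w := by
        refine e4.congr_of_eventuallyEq ?_
        filter_upwards [hevW t w hq] with v hv
        exact (hG2 t v hv).symm
      have e5 : HasDerivAt (fun v => lam0^2/2*(2*F2 (t,v)^4 - 2*F1 (t,v)*F2 (t,v)^2*F3 (t,v) - F1 (t,v)^2*F2 (t,v)*F4 (t,v) + 2*F1 (t,v)^2*F3 (t,v)^2)/F2 (t,v)^3) (lam0^2/2*((6*F2 (t,w)^3*F3 (t,w) - 4*F1 (t,w)*F2 (t,w)^2*F4 (t,w) + 3*F1 (t,w)^2*F3 (t,w)*F4 (t,w) - F1 (t,w)^2*F2 (t,w)*F5 (t,w))*F2 (t,w) - 3*F3 (t,w)*(2*F2 (t,w)^4 - 2*F1 (t,w)*F2 (t,w)^2*F3 (t,w) - F1 (t,w)^2*F2 (t,w)*F4 (t,w) + 2*F1 (t,w)^2*F3 (t,w)^2))/F2 (t,w)^4) w := by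
        have hcomb := (((((((hd2 t w hq).pow 4).const_mul 2).sub
            ((((hd1 t w hq).const_mul 2).mul ((hd2 t w hq).pow 2)).mul (hd3 t w hq))).sub
            ((((hd1 t w hq).pow 2).mul (hd2 t w hq)).mul (hd4 t w hq))).add
            ((((hd1 t w hq).pow 2).const_mul 2).mul ((hd3 t w hq).pow 2))).const_mul
            (lam0^2/2)).div ((hd2 t w hq).pow 3) (pow_ne_zero 3 hb)
        refine hcomb.congr_deriv ?_
        simp only [Pi.pow_apply, Pi.mul_apply, Pi.add_apply, Pi.sub_apply, Pi.neg_apply, Pi.div_apply]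
        field_simp
        ring
      rw [e1]
      exact e4'.unique e5
    have hP : ∀ s u : ℝ, (s,u) ∈ Set.Iio T ×ˢ Set.Ioi (0:ℝ) →
        D1V0 s u = -F1 (s,u)^2/F2 (s,u) := by
      intro s u h
      have hb := hbne s u h
      rw [hD1V0, hR, hW1 s u h, hW2 s u h]
      ring
    have hr1slice : ∀ s u : ℝ, (s,u) ∈ Set.Iio T ×ˢ Set.Ioi (0:ℝ) →
        HasDerivAt (fun v => -F1 (s,v)^2/F2 (s,v)) ((F1 (s,u)^2*F3 (s,u) - 2*F1 (s,u)*F2 (s,u)^2)/F2 (s,u)^2) u := by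
      intro s u h
      have hb := hbne s u h
      have hcomb := (((hd1 s u h).pow 2).neg).div (hd2 s u h) hb
      refine hcomb.congr_deriv ?_
      simp only [Pi.pow_apply, Pi.mul_apply, Pi.add_apply, Pi.sub_apply, Pi.neg_apply, Pi.div_apply]
      field_simp
      ring
    have hPd : ∀ s u : ℝ, (s,u) ∈ Set.Iio T ×ˢ Set.Ioi (0:ℝ) →
        HasDerivAt (fun v => D1V0 s v) ((F1 (s,u)^2*F3 (s,u) - 2*F1 (s,u)*F2 (s,u)^2)/F2 (s,u)^2) u := by
      intro s u h
      refine (hr1slice s u h).congr_of_eventuallyEq ?_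
      filter_upwards [hevW s u h] with v hv
      exact hP s v hv
    have hPw : ∀ s u : ℝ, (s,u) ∈ Set.Iio T ×ˢ Set.Ioi (0:ℝ) →
        dW2 D1V0 s u = (F1 (s,u)^2*F3 (s,u) - 2*F1 (s,u)*F2 (s,u)^2)/F2 (s,u)^2 := by
      intro s u h
      exact (hPd s u h).deriv
    have hQ : ∀ s u : ℝ, (s,u) ∈ Set.Iio T ×ˢ Set.Ioi (0:ℝ) →
        D1sqV0 s u = (2*F1 (s,u)^2*F2 (s,u)^2 - F1 (s,u)^3*F3 (s,u))/F2 (s,u)^3 := by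
      intro s u h
      have hb := hbne s u h
      rw [hD1sqV0, hR, hW1 s u h, hW2 s u h, hPw s u h]
      field_simp
      ring
    have hr2slice : ∀ s u : ℝ, (s,u) ∈ Set.Iio T ×ˢ Set.Ioi (0:ℝ) →
        HasDerivAt (fun v => (2*F1 (s,v)^2*F2 (s,v)^2 - F1 (s,v)^3*F3 (s,v))/F2 (s,v)^3) ((4*F1 (s,u)*F2 (s,u)^4 - 5*F1 (s,u)^2*F2 (s,u)^2*F3 (s,u) - F1 (s,u)^3*F2 (s,u)*F4 (s,u) + 3*F1 (s,u)^3*F3 (s,u)^2)/F2 (s,u)^4) u := by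
      intro s u h
      have hb := hbne s u h
      have hcomb := (((((hd1 s u h).pow 2).const_mul 2).mul ((hd2 s u h).pow 2)).sub
        (((hd1 s u h).pow 3).mul (hd3 s u h))).div ((hd2 s u h).pow 3) (pow_ne_zero 3 hb)
      refine hcomb.congr_deriv ?_
      simp only [Pi.pow_apply, Pi.mul_apply, Pi.add_apply, Pi.sub_apply, Pi.neg_apply, Pi.div_apply]
      field_simp
      ring
    have hQd : ∀ s u : ℝ, (s,u) ∈ Set.Iio T ×ˢ Set.Ioi (0:ℝ) →
        HasDerivAt (fun v => D1sqV0 s v) ((4*F1 (s,u)*F2 (s,u)^4 - 5*F1 (s,u)^2*F2 (s,u)^2*F3 (s,u) - F1 (s,u)^3*F2 (s,u)*F4 (s,u) + 3*F1 (s,u)^3*F3 (s,u)^2)/F2 (s,u)^4) u := by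
      intro s u h
      refine (hr2slice s u h).congr_of_eventuallyEq ?_
      filter_upwards [hevW s u h] with v hv
      exact hQ s v hv
    have ed4W : ∀ s u : ℝ, (s,u) ∈ Set.Iio T ×ˢ Set.Ioi (0:ℝ) → ∀ x' y' : ℝ,
        d4W V1 s x' y' u = (T-s)*lam0*A s x' y'*((F1 (s,u)^2*F3 (s,u) - 2*F1 (s,u)*F2 (s,u)^2)/F2 (s,u)^2)
          + (1/2)*(T-s)^2*lam0*B*((4*F1 (s,u)*F2 (s,u)^4 - 5*F1 (s,u)^2*F2 (s,u)^2*F3 (s,u) - F1 (s,u)^3*F2 (s,u)*F4 (s,u) + 3*F1 (s,u)^3*F3 (s,u)^2)/F2 (s,u)^4) := by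
      intro s u h x' y'
      have hfun : (fun v => V1 s x' y' v) = fun v =>
          (T-s)*lam0*A s x' y'*D1V0 s v + (1/2)*(T-s)^2*lam0*B*D1sqV0 s v := by
        funext v; rw [hV1]
      show deriv (fun v => V1 s x' y' v) u = _
      rw [hfun]
      exact (((hPd s u h).const_mul ((T-s)*lam0*A s x' y')).add
        ((hQd s u h).const_mul ((1/2)*(T-s)^2*lam0*B))).deriv
    have ed4WW : d4W (d4W V1) t x y w = (T-t)*lam0*A t x y*((F1 (t,w)^2*F2 (t,w)*F4 (t,w) + 2*F1 (t,w)*F2 (t,w)^2*F3 (t,w) - 2*F2 (t,w)^4 - 2*F1 (t,w)^2*F3 (t,w)^2)/F2 (t,w)^3)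
        + (1/2)*(T-t)^2*lam0*B*(((4*F2 (t,w)^5 + 6*F1 (t,w)*F2 (t,w)^3*F3 (t,w) - F1 (t,w)^2*F2 (t,w)*F3 (t,w)^2 - 8*F1 (t,w)^2*F2 (t,w)^2*F4 (t,w) + 5*F1 (t,w)^3*F3 (t,w)*F4 (t,w) - F1 (t,w)^3*F2 (t,w)*F5 (t,w))*F2 (t,w) - 4*F3 (t,w)*(4*F1 (t,w)*F2 (t,w)^4 - 5*F1 (t,w)^2*F2 (t,w)^2*F3 (t,w) - F1 (t,w)^3*F2 (t,w)*F4 (t,w) + 3*F1 (t,w)^3*F3 (t,w)^2))/F2 (t,w)^5) := by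
      have hb := hbne t w hq
      have hr1w : HasDerivAt (fun v => (F1 (t,v)^2*F3 (t,v) - 2*F1 (t,v)*F2 (t,v)^2)/F2 (t,v)^2) ((F1 (t,w)^2*F2 (t,w)*F4 (t,w) + 2*F1 (t,w)*F2 (t,w)^2*F3 (t,w) - 2*F2 (t,w)^4 - 2*F1 (t,w)^2*F3 (t,w)^2)/F2 (t,w)^3) w := by
        have hcomb := ((((hd1 t w hq).pow 2).mul (hd3 t w hq)).sub
          (((hd1 t w hq).const_mul 2).mul ((hd2 t w hq).pow 2))).div
          ((hd2 t w hq).pow 2) (pow_ne_zero 2 hb)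
        refine hcomb.congr_deriv ?_
        simp only [Pi.pow_apply, Pi.mul_apply, Pi.add_apply, Pi.sub_apply, Pi.neg_apply, Pi.div_apply]
        field_simp
        ring
      have hr2w : HasDerivAt (fun v => (4*F1 (t,v)*F2 (t,v)^4 - 5*F1 (t,v)^2*F2 (t,v)^2*F3 (t,v) - F1 (t,v)^3*F2 (t,v)*F4 (t,v) + 3*F1 (t,v)^3*F3 (t,v)^2)/F2 (t,v)^4) (((4*F2 (t,w)^5 + 6*F1 (t,w)*F2 (t,w)^3*F3 (t,w) - F1 (t,w)^2*F2 (t,w)*F3 (t,w)^2 - 8*F1 (t,w)^2*F2 (t,w)^2*F4 (t,w) + 5*F1 (t,w)^3*F3 (t,w)*F4 (t,w) - F1 (t,w)^3*F2 (t,w)*F5 (t,w))*F2 (t,w) - 4*F3 (t,w)*(4*F1 (t,w)*F2 (t,w)^4 - 5*F1 (t,w)^2*F2 (t,w)^2*F3 (t,w) - F1 (t,w)^3*F2 (t,w)*F4 (t,w) + 3*F1 (t,w)^3*F3 (t,w)^2))/F2 (t,w)^5) w := by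
        have hcomb := ((((((hd1 t w hq).const_mul 4).mul ((hd2 t w hq).pow 4)).sub
          ((((((hd1 t w hq).pow 2).const_mul 5).mul ((hd2 t w hq).pow 2)).mul
          (hd3 t w hq)))).sub ((((hd1 t w hq).pow 3).mul (hd2 t w hq)).mul
          (hd4 t w hq))).add ((((hd1 t w hq).pow 3).const_mul 3).mul
          ((hd3 t w hq).pow 2))).div ((hd2 t w hq).pow 4) (pow_ne_zero 4 hb)
        refine hcomb.congr_deriv ?_
        simp only [Pi.pow_apply, Pi.mul_apply, Pi.add_apply, Pi.sub_apply, Pi.neg_apply, Pi.div_apply]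
        field_simp
        ring
      have heq : (fun v => d4W V1 t x y v) =ᶠ[nhds w] (fun v =>
          (T-t)*lam0*A t x y*((F1 (t,v)^2*F3 (t,v) - 2*F1 (t,v)*F2 (t,v)^2)/F2 (t,v)^2) + (1/2)*(T-t)^2*lam0*B*((4*F1 (t,v)*F2 (t,v)^4 - 5*F1 (t,v)^2*F2 (t,v)^2*F3 (t,v) - F1 (t,v)^3*F2 (t,v)*F4 (t,v) + 3*F1 (t,v)^3*F3 (t,v)^2)/F2 (t,v)^4)) := by
        filter_upwards [hevW t w hq] with v hv
        exact ed4W t v hv x y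
      show deriv (fun v => d4W V1 t x y v) w = _
      rw [heq.deriv_eq]
      exact ((hr1w.const_mul ((T-t)*lam0*A t x y)).add
        (hr2w.const_mul ((1/2)*(T-t)^2*lam0*B))).deriv
    have ed4Y : ∀ t' x' y' w' : ℝ, d4Y V1 t' x' y' w' = (T-t')*lam0*lam01*D1V0 t' w' := by
      intro t' x' y' w'
      have hfun : (fun z => V1 t' x' z w') = fun z =>
          ((T-t')*lam0*(lam10*((x'-xbar)+(1/2)*(T-t')*(μ0-σ0^2/2))
            + lam01*((0-ybar)+(1/2)*(T-t')*c0))*D1V0 t' w'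
            + (1/2)*(T-t')^2*lam0*B*D1sqV0 t' w')
          + ((T-t')*lam0*lam01*D1V0 t' w')*z := by
        funext z; rw [hV1, hA]; ring
      show deriv (fun z => V1 t' x' z w') y' = _
      rw [hfun]
      exact deriv_const_add_mul _ _ y'
    have ed4X : ∀ t' x' y' w' : ℝ, d4X V1 t' x' y' w' = (T-t')*lam0*lam10*D1V0 t' w' := by
      intro t' x' y' w'
      have hfun : (fun z => V1 t' z y' w') = fun z =>
          ((T-t')*lam0*(lam10*((0-xbar)+(1/2)*(T-t')*(μ0-σ0^2/2))
            + lam01*((y'-ybar)+(1/2)*(T-t')*c0))*D1V0 t' w'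
            + (1/2)*(T-t')^2*lam0*B*D1sqV0 t' w')
          + ((T-t')*lam0*lam10*D1V0 t' w')*z := by
        funext z; rw [hV1, hA]; ring
      show deriv (fun z => V1 t' z y' w') x' = _
      rw [hfun]
      exact deriv_const_add_mul _ _ x'
    have ed4XX : d4X (d4X V1) t x y w = 0 := by
      show deriv (fun z => d4X V1 t z y w) x = 0
      have hfun : (fun z => d4X V1 t z y w) = fun _ => (T-t)*lam0*lam10*D1V0 t w := by
        funext z; exact ed4X t z y w
      rw [hfun, deriv_const]
    have ed4XY : d4X (d4Y V1) t x y w = 0 := by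
      show deriv (fun z => d4Y V1 t z y w) x = 0
      have hfun : (fun z => d4Y V1 t z y w) = fun _ => (T-t)*lam0*lam01*D1V0 t w := by
        funext z; exact ed4Y t z y w
      rw [hfun, deriv_const]
    have ed4YY : d4Y (d4Y V1) t x y w = 0 := by
      show deriv (fun z => d4Y V1 t x z w) y = 0
      have hfun : (fun z => d4Y V1 t x z w) = fun _ => (T-t)*lam0*lam01*D1V0 t w := by
        funext z; exact ed4Y t x z w
      rw [hfun, deriv_const]
    have ed4WY : d4W (d4Y V1) t x y w = (T-t)*lam0*lam01*((F1 (t,w)^2*F3 (t,w) - 2*F1 (t,w)*F2 (t,w)^2)/F2 (t,w)^2) := by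
      show deriv (fun v => d4Y V1 t x y v) w = _
      have hfun : (fun v => d4Y V1 t x y v) = fun v => (T-t)*lam0*lam01*D1V0 t v := by
        funext v; exact ed4Y t x y v
      rw [hfun]
      exact ((hPd t w hq).const_mul ((T-t)*lam0*lam01)).deriv
    have ed4WX : d4W (d4X V1) t x y w = (T-t)*lam0*lam10*((F1 (t,w)^2*F3 (t,w) - 2*F1 (t,w)*F2 (t,w)^2)/F2 (t,w)^2) := by
      show deriv (fun v => d4X V1 t x y v) w = _
      have hfun : (fun v => d4X V1 t x y v) = fun v => (T-t)*lam0*lam10*D1V0 t v := by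
        funext v; exact ed4X t x y v
      rw [hfun]
      exact ((hPd t w hq).const_mul ((T-t)*lam0*lam10)).deriv
    have hdT1 : HasDerivAt (fun r => F1 (r,w)) (lam0^2/2*(2*F1 (t,w)*F2 (t,w)^2 - F1 (t,w)^2*F3 (t,w))/F2 (t,w)^2) t := by
      have h' := hasDerivAt_sliceT ((hC1 hq).differentiableAt hone)
      rwa [hG1 t w hq] at h'
    have hdT2 : HasDerivAt (fun r => F2 (r,w)) (lam0^2/2*(2*F2 (t,w)^4 - 2*F1 (t,w)*F2 (t,w)^2*F3 (t,w) - F1 (t,w)^2*F2 (t,w)*F4 (t,w) + 2*F1 (t,w)^2*F3 (t,w)^2)/F2 (t,w)^3) t := by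
      have h' := hasDerivAt_sliceT ((hC2 hq).differentiableAt hone)
      rwa [hG2 t w hq] at h'
    have hdT3 : HasDerivAt (fun r => F3 (r,w)) (lam0^2/2*((6*F2 (t,w)^3*F3 (t,w) - 4*F1 (t,w)*F2 (t,w)^2*F4 (t,w) + 3*F1 (t,w)^2*F3 (t,w)*F4 (t,w) - F1 (t,w)^2*F2 (t,w)*F5 (t,w))*F2 (t,w) - 3*F3 (t,w)*(2*F2 (t,w)^4 - 2*F1 (t,w)*F2 (t,w)^2*F3 (t,w) - F1 (t,w)^2*F2 (t,w)*F4 (t,w) + 2*F1 (t,w)^2*F3 (t,w)^2))/F2 (t,w)^4) t := by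
      have h' := hasDerivAt_sliceT ((hC3 hq).differentiableAt hone)
      rwa [hG3] at h'
    have hPt : HasDerivAt (fun r => D1V0 r w) ((F1 (t,w)^2*(lam0^2/2*(2*F2 (t,w)^4 - 2*F1 (t,w)*F2 (t,w)^2*F3 (t,w) - F1 (t,w)^2*F2 (t,w)*F4 (t,w) + 2*F1 (t,w)^2*F3 (t,w)^2)/F2 (t,w)^3) - 2*F1 (t,w)*F2 (t,w)*(lam0^2/2*(2*F1 (t,w)*F2 (t,w)^2 - F1 (t,w)^2*F3 (t,w))/F2 (t,w)^2))/F2 (t,w)^2) t := by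
      have hb := hbne t w hq
      have hr1t : HasDerivAt (fun r => -F1 (r,w)^2/F2 (r,w)) ((F1 (t,w)^2*(lam0^2/2*(2*F2 (t,w)^4 - 2*F1 (t,w)*F2 (t,w)^2*F3 (t,w) - F1 (t,w)^2*F2 (t,w)*F4 (t,w) + 2*F1 (t,w)^2*F3 (t,w)^2)/F2 (t,w)^3) - 2*F1 (t,w)*F2 (t,w)*(lam0^2/2*(2*F1 (t,w)*F2 (t,w)^2 - F1 (t,w)^2*F3 (t,w))/F2 (t,w)^2))/F2 (t,w)^2) t := by
        have hcomb := ((hdT1.pow 2).neg).div hdT2 hb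
        refine hcomb.congr_deriv ?_
        simp only [Pi.pow_apply, Pi.mul_apply, Pi.add_apply, Pi.sub_apply, Pi.neg_apply, Pi.div_apply]
        field_simp
        ring
      refine hr1t.congr_of_eventuallyEq ?_
      filter_upwards [hevT t w hq] with r hr
      exact hP r w hr
    have hQt : HasDerivAt (fun r => D1sqV0 r w) (((4*F1 (t,w)*F2 (t,w)^2*(lam0^2/2*(2*F1 (t,w)*F2 (t,w)^2 - F1 (t,w)^2*F3 (t,w))/F2 (t,w)^2) + 4*F1 (t,w)^2*F2 (t,w)*(lam0^2/2*(2*F2 (t,w)^4 - 2*F1 (t,w)*F2 (t,w)^2*F3 (t,w) - F1 (t,w)^2*F2 (t,w)*F4 (t,w) + 2*F1 (t,w)^2*F3 (t,w)^2)/F2 (t,w)^3) - 3*F1 (t,w)^2*F3 (t,w)*(lam0^2/2*(2*F1 (t,w)*F2 (t,w)^2 - F1 (t,w)^2*F3 (t,w))/F2 (t,w)^2) - F1 (t,w)^3*(lam0^2/2*((6*F2 (t,w)^3*F3 (t,w) - 4*F1 (t,w)*F2 (t,w)^2*F4 (t,w) + 3*F1 (t,w)^2*F3 (t,w)*F4 (t,w)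 - F1 (t,w)^2*F2 (t,w)*F5 (t,w))*F2 (t,w) - 3*F3 (t,w)*(2*F2 (t,w)^4 - 2*F1 (t,w)*F2 (t,w)^2*F3 (t,w) - F1 (t,w)^2*F2 (t,w)*F4 (t,w) + 2*F1 (t,w)^2*F3 (t,w)^2))/F2 (t,w)^4))*F2 (t,w) - 3*(lam0^2/2*(2*F2 (t,w)^4 - 2*F1 (t,w)*F2 (t,w)^2*F3 (t,w) - F1 (t,w)^2*F2 (t,w)*F4 (t,w) + 2*F1 (t,w)^2*F3 (t,w)^2)/F2 (t,w)^3)*(2*F1 (t,w)^2*F2 (t,w)^2 - F1 (t,w)^3*F3 (t,w)))/F2 (t,w)^4) t := by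
      have hb := hbne t w hq
      have hr2t : HasDerivAt (fun r =>
          (2*F1 (r,w)^2*F2 (r,w)^2 - F1 (r,w)^3*F3 (r,w))/F2 (r,w)^3) (((4*F1 (t,w)*F2 (t,w)^2*(lam0^2/2*(2*F1 (t,w)*F2 (t,w)^2 - F1 (t,w)^2*F3 (t,w))/F2 (t,w)^2) + 4*F1 (t,w)^2*F2 (t,w)*(lam0^2/2*(2*F2 (t,w)^4 - 2*F1 (t,w)*F2 (t,w)^2*F3 (t,w) - F1 (t,w)^2*F2 (t,w)*F4 (t,w) + 2*F1 (t,w)^2*F3 (t,w)^2)/F2 (t,w)^3) - 3*F1 (t,w)^2*F3 (t,w)*(lam0^2/2*(2*F1 (t,w)*F2 (t,w)^2 - F1 (t,w)^2*F3 (t,w))/F2 (t,w)^2) - F1 (t,w)^3*(lam0^2/2*((6*F2 (t,w)^3*F3 (t,w) - 4*F1 (t,w)*F2 (t,w)^2*F4 (t,w) + 3*F1 (t,w)^2*F3 (t,w)*F4 (t,w) - F1 (t,w)^2*F2 (t,w)*F5 (t,w))*F2 (t,w) - 3*F3 (t,w)*(2*F2 (t,w)^4 - 2*F1 (t,w)*F2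 (t,w)^2*F3 (t,w) - F1 (t,w)^2*F2 (t,w)*F4 (t,w) + 2*F1 (t,w)^2*F3 (t,w)^2))/F2 (t,w)^4))*F2 (t,w) - 3*(lam0^2/2*(2*F2 (t,w)^4 - 2*F1 (t,w)*F2 (t,w)^2*F3 (t,w) - F1 (t,w)^2*F2 (t,w)*F4 (t,w) + 2*F1 (t,w)^2*F3 (t,w)^2)/F2 (t,w)^3)*(2*F1 (t,w)^2*F2 (t,w)^2 - F1 (t,w)^3*F3 (t,w)))/F2 (t,w)^4) t := by
        have hcomb := ((((hdT1.pow 2).const_mul 2).mul (hdT2.pow 2)).sub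
          ((hdT1.pow 3).mul hdT3)).div (hdT2.pow 3) (pow_ne_zero 3 hb)
        refine hcomb.congr_deriv ?_
        simp only [Pi.pow_apply, Pi.mul_apply, Pi.add_apply, Pi.sub_apply, Pi.neg_apply, Pi.div_apply]
        field_simp
        ring
      refine hr2t.congr_of_eventuallyEq ?_
      filter_upwards [hevT t w hq] with r hr
      exact hQ r w hr
    have hTs : HasDerivAt (fun s => T - s) (-1 : ℝ) t := by
      simpa using (hasDerivAt_id t).const_sub T
    have hAt : HasDerivAt (fun s => A s x y) (-((lam10*(μ0-σ0^2/2)+lam01*c0)/2)) t := by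
      have hfun : (fun s => A s x y) = fun s =>
          (lam10*(x-xbar)+lam01*(y-ybar)+(lam10*(μ0-σ0^2/2)+lam01*c0)/2*T) +
          (-((lam10*(μ0-σ0^2/2)+lam01*c0)/2))*s := by
        funext s; rw [hA]; ring
      rw [hfun]
      exact hasDerivAt_const_add_mul _ _ t
    have ed4T : d4T V1 t x y w = -(lam0*A t x y*D1V0 t w)
        + (T-t)*lam0*(-((lam10*(μ0-σ0^2/2)+lam01*c0)/2))*D1V0 t w
        + (T-t)*lam0*A t x y*((F1 (t,w)^2*(lam0^2/2*(2*F2 (t,w)^4 - 2*F1 (t,w)*F2 (t,w)^2*F3 (t,w) - F1 (t,w)^2*F2 (t,w)*F4 (t,w) + 2*F1 (t,w)^2*F3 (t,w)^2)/F2 (t,w)^3) - 2*F1 (t,w)*F2 (t,w)*(lam0^2/2*(2*F1 (t,w)*F2 (t,w)^2 - F1 (t,w)^2*F3 (t,w))/F2 (t,w)^2))/F2 (t,w)^2)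
        - (T-t)*lam0*B*D1sqV0 t w
        + (1/2)*(T-t)^2*lam0*B*(((4*F1 (t,w)*F2 (t,w)^2*(lam0^2/2*(2*F1 (t,w)*F2 (t,w)^2 - F1 (t,w)^2*F3 (t,w))/F2 (t,w)^2) + 4*F1 (t,w)^2*F2 (t,w)*(lam0^2/2*(2*F2 (t,w)^4 - 2*F1 (t,w)*F2 (t,w)^2*F3 (t,w) - F1 (t,w)^2*F2 (t,w)*F4 (t,w) + 2*F1 (t,w)^2*F3 (t,w)^2)/F2 (t,w)^3) - 3*F1 (t,w)^2*F3 (t,w)*(lam0^2/2*(2*F1 (t,w)*F2 (t,w)^2 - F1 (t,w)^2*F3 (t,w))/F2 (t,w)^2) - F1 (t,w)^3*(lam0^2/2*((6*F2 (t,w)^3*F3 (t,w) - 4*F1 (t,w)*F2 (t,w)^2*F4 (t,w) + 3*F1 (t,w)^2*F3 (t,w)*F4 (t,w) - F1 (t,w)^2*F2 (t,w)*F5 (t,w))*F2 (t,w) - 3*F3 (t,w)*(2*F2 (t,w)^4 - 2*F1 (t,w)*F2 (t,w)^2*F3 (t,w) - F1 (t,w)^2*F2 (t,w)*F4 (t,w)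 + 2*F1 (t,w)^2*F3 (t,w)^2))/F2 (t,w)^4))*F2 (t,w) - 3*(lam0^2/2*(2*F2 (t,w)^4 - 2*F1 (t,w)*F2 (t,w)^2*F3 (t,w) - F1 (t,w)^2*F2 (t,w)*F4 (t,w) + 2*F1 (t,w)^2*F3 (t,w)^2)/F2 (t,w)^3)*(2*F1 (t,w)^2*F2 (t,w)^2 - F1 (t,w)^3*F3 (t,w)))/F2 (t,w)^4) := by
      show deriv (fun s => V1 s x y w) t = _
      have hfun : (fun s => V1 s x y w) = fun s =>
          (T-s)*lam0*A s x y*D1V0 s w + (1/2)*(T-s)^2*lam0*B*D1sqV0 s w := by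
        funext s; rw [hV1]
      rw [hfun]
      have h2 := ((hTs.mul_const lam0).mul hAt).mul hPt
      have k3 := (((hTs.pow 2).const_mul (1/2 : ℝ)).mul_const lam0).mul_const B
      have hbig := (h2.add (k3.mul hQt)).deriv
      refine hbig.trans ?_
      simp only [Pi.pow_apply, Pi.mul_apply, Pi.add_apply, Pi.sub_apply, Pi.neg_apply, Pi.div_apply]
      ring
    have hRq : R t w = -F1 (t,w)/F2 (t,w) := by
      rw [hR, hW1 t w hq, hW2 t w hq]
    have hb := hbne t w hq
    rw [ed4T, ed4XX, ed4XY, ed4YY, ed4X t x y w, ed4Y t x y w, ed4WW,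
      ed4W t w hq x y, ed4WY, ed4WX, hRq, hP t w hq, hQ t w hq, hA, hB]
    field_simp
    ring
  · intro x y w hw
    rw [hV1]
    ring_nf
end
end

section
/- Let γ > 1, ρ ∈ (-1, 1), η := γ/(γ + (1-γ)ρ²), n ∈ ℕ, T > 0 and w > 0, and fix constants 0 < m ≤ K. Let ψ : [0, T] × ℝ → ℝ and ψ₀, ψ₁, …, ψ_n : [0, T] × ℝ → ℝ be functions such that: ψ₀(t, y) depends only on t; m ≤ ψ(t, y) ≤ K and m ≤ ψ₀(t) ≤ K for all (t, y); sup_y |ψ_k(t, y)| ≤ K (T - t)^{(k+2)/2} for each 1 ≤ k ≤ n and all t ∈ [0, T]; and sup_y |ψ(t, y) - Σ_{k=0}^n ψ_k(t, y)| ≤ K (T - t)^{(n+3)/2} for all t ∈ [0, T]. Define V(t, y) := (w^{1-γ}/(1-γ)) ψ(t, y)^η, V₀(t, y) := (w^{1-γ}/(1-γ)) ψ₀(t)^η, and for 1 ≤ k ≤ n, V_k(t, y) := (w^{1-γ}/(1-γ)) Σ_{m'=1}^{k} (1/m'!) [∏_{j=0}^{m'-1}(η - j)] ψ₀(t)^{η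 - m'} Σ_{(i₁,…,i_{m'}) ∈ I_{k,m'}} ∏_{j=1}^{m'} ψ_{i_j}(t, y), where I_{k,m'} := { (i₁,…,i_{m'}) ∈ ℕ₊^{m'} : i₁ + ⋯ + i_{m'} = k }. Then there exists a constant C > 0 such that for all t ∈ [max(0, T-1), T] and all y ∈ ℝ, |V(t, y) - Σ_{k=0}^n V_k(t, y)| ≤ C (T - t)^{(n+3)/2}. -/
noncomputable section

namespace VFA
open Finset


lemma sum_range_succ_eq (f : ℕ → ℝ) (n : ℕ) :
    ∑ k ∈ Finset.range (n+1), f k = f 0 + ∑ k ∈ Finset.Icc 1 n, f k := by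
  induction n with
  | zero => simp
  | succ n ih =>
    rw [Finset.sum_range_succ, ih, Finset.sum_Icc_succ_top (by omega : 1 ≤ n+1)]
    ring

lemma abs_pow_sub_pow_le {B u v : ℝ} (hB : 0 ≤ B) (hu : |u| ≤ B) (hv : |v| ≤ B) :
    ∀ p : ℕ, |u ^ p - v ^ p| ≤ p * B ^ (p - 1) * |u - v| := by
  intro p
  induction p with
  | zero => simp
  | succ q ih =>
    have habs_u : |u ^ q| ≤ B ^ q := by
      rw [abs_pow]; exact pow_le_pow_left₀ (abs_nonneg u) hu q
    have key : u ^ (q+1) - v ^ (q+1) = u ^ q * (u - v) + v * (u ^ q - v ^ q) := by ring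
    have h2 : (q : ℝ) * (B * B ^ (q - 1)) ≤ q * B ^ q := by
      cases q with
      | zero => simp
      | succ r =>
        have : B * B ^ (r + 1 - 1) = B ^ (r+1) := by
          simp [pow_succ]; ring
        rw [this]
    calc |u ^ (q+1) - v ^ (q+1)|
        = |u ^ q * (u - v) + v * (u ^ q - v ^ q)| := by rw [key]
      _ ≤ |u ^ q * (u - v)| + |v * (u ^ q - v ^ q)| := abs_add_le _ _
      _ = |u ^ q| * |u - v| + |v| * |u ^ q - v ^ q| := by rw [abs_mul, abs_mul]
      _ ≤ B ^ q * |u - v| + B * ((q : ℝ) * B ^ (q - 1) * |u - v|) := by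
          refine add_le_add (mul_le_mul_of_nonneg_right habs_u (abs_nonneg _)) ?_
          exact mul_le_mul hv ih (abs_nonneg _) hB
      _ ≤ ((q:ℝ)+1) * B ^ ((q+1) - 1) * |u - v| := by
          simp only [Nat.add_sub_cancel]
          nlinarith [abs_nonneg (u - v), h2]
      _ = ((q+1 : ℕ) : ℝ) * B ^ ((q+1) - 1) * |u - v| := by push_cast; ring

lemma rpow_base_bound {m K p : ℝ} (hm : 0 < m) {a : ℝ} (ha : a ∈ Set.Icc m K) :
    a ^ p ≤ m ^ p + K ^ p := by
  have haK : m ≤ K := le_trans ha.1 ha.2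
  rcases le_or_gt 0 p with hp | hp
  · have h1 : a ^ p ≤ K ^ p := Real.rpow_le_rpow (le_trans hm.le ha.1) ha.2 hp
    have h2 : 0 < m ^ p := Real.rpow_pos_of_pos hm p
    linarith
  · have h1 : a ^ p ≤ m ^ p := Real.rpow_le_rpow_of_nonpos hm ha.1 hp.le
    have h2 : 0 < K ^ p := Real.rpow_pos_of_pos (lt_of_lt_of_le hm haK) p
    linarith

lemma abs_sub_le_of_mem_uIcc {a x z : ℝ} (hz : z ∈ Set.uIcc a x) : |z - a| ≤ |x - a| := by
  rcases le_total a x with h | h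
  · rw [Set.uIcc_of_le h] at hz
    rw [abs_of_nonneg (by linarith [hz.1]), abs_of_nonneg (by linarith)]
    linarith [hz.2]
  · rw [Set.uIcc_of_ge h] at hz
    rw [abs_of_nonpos (by linarith [hz.2]), abs_of_nonpos (by linarith)]
    linarith [hz.1]


lemma taylor_rpow (m K : ℝ) (hm : 0 < m) (hmK : m ≤ K) :
    ∀ (n : ℕ) (β : ℝ), ∃ C > (0:ℝ), ∀ a ∈ Set.Icc m K, ∀ x ∈ Set.Icc m K,
      |x ^ β - ∑ m' ∈ Finset.range (n+1),
          1 / (Nat.factorial m' : ℝ) * (∏ j ∈ Finset.range m', (β - (j:ℝ)))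
            * a ^ (β - (m':ℝ)) * (x - a) ^ m'|
        ≤ C * |x - a| ^ (n + 1) := by
  intro n
  induction n with
  | zero =>
    intro β
    refine ⟨|β| * (m ^ (β-1) + K ^ (β-1)) + 1, by
      have h1 := Real.rpow_pos_of_pos hm (β-1)
      have h2 := Real.rpow_pos_of_pos (hm.trans_le hmK) (β-1)
      nlinarith [abs_nonneg β], ?_⟩
    intro a ha x hx
    have hsimp : ∑ m' ∈ Finset.range 1,
        1 / (Nat.factorial m' : ℝ) * (∏ j ∈ Finset.range m', (β - (j:ℝ)))
          * a ^ (β - (m':ℝ)) * (x - a) ^ m' = a ^ β := by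
      simp
    rw [hsimp]
    have hmvt : ‖x ^ β - a ^ β‖ ≤ (|β| * (m ^ (β-1) + K ^ (β-1))) * ‖x - a‖ := by
      refine Convex.norm_image_sub_le_of_norm_hasDerivWithin_le
        (f := fun z : ℝ => z ^ β) (f' := fun z : ℝ => β * z ^ (β - 1))
        (s := Set.Icc m K) (fun z hz => ?_) (fun z hz => ?_) (convex_Icc m K) ha hx
      · exact (Real.hasDerivAt_rpow_const
          (Or.inl (ne_of_gt (lt_of_lt_of_le hm hz.1)))).hasDerivWithinAt
      · have h1 : z ^ (β - 1) ≤ m ^ (β-1) + K ^ (β-1) := rpow_base_bound hm hz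
        have h2 : (0:ℝ) < z ^ (β - 1) :=
          Real.rpow_pos_of_pos (lt_of_lt_of_le hm hz.1) _
        rw [Real.norm_eq_abs, abs_mul, abs_of_pos h2]
        exact mul_le_mul_of_nonneg_left h1 (abs_nonneg β)
    rw [Real.norm_eq_abs, Real.norm_eq_abs] at hmvt
    have : |x - a| ^ (0 + 1) = |x - a| := by ring
    rw [this]
    nlinarith [abs_nonneg (x - a)]
  | succ n ih =>
    intro β
    obtain ⟨C, hCpos, hIH⟩ := ih (β - 1)
    refine ⟨|β| * C + 1, by nlinarith [mul_nonneg (abs_nonneg β) hCpos.le], ?_⟩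
    intro a ha x hx
    set P : ℝ → ℝ := fun z => ∑ m' ∈ Finset.range (n+1+1),
        1 / (Nat.factorial m' : ℝ) * (∏ j ∈ Finset.range m', (β - (j:ℝ)))
          * a ^ (β - (m':ℝ)) * (z - a) ^ m' with hP
    set Q : ℝ → ℝ := fun z => ∑ m' ∈ Finset.range (n+1),
        1 / (Nat.factorial m' : ℝ) * (∏ j ∈ Finset.range m', ((β-1) - (j:ℝ)))
          * a ^ ((β-1) - (m':ℝ)) * (z - a) ^ m' with hQ
    have hderiv : ∀ z ∈ Set.Icc m K,
        HasDerivAt (fun z => z ^ β - P z) (β * (z ^ (β - 1) - Q z)) z := by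
      intro z hz
      have h1 : HasDerivAt (fun z : ℝ => z ^ β) (β * z ^ (β - 1)) z :=
        Real.hasDerivAt_rpow_const (Or.inl (ne_of_gt (lt_of_lt_of_le hm hz.1)))
      have h2 : HasDerivAt P
          (∑ m' ∈ Finset.range (n+1+1),
            1 / (Nat.factorial m' : ℝ) * (∏ j ∈ Finset.range m', (β - (j:ℝ)))
              * a ^ (β - (m':ℝ)) * ((m' : ℝ) * (z - a) ^ (m' - 1) * 1)) z := by
        refine HasDerivAt.fun_sum (fun m' _ => ?_)
        exact (((hasDerivAt_id z).sub_const a).pow m').const_mul _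
      have hsum : ∑ m' ∈ Finset.range (n+1+1),
            1 / (Nat.factorial m' : ℝ) * (∏ j ∈ Finset.range m', (β - (j:ℝ)))
              * a ^ (β - (m':ℝ)) * ((m' : ℝ) * (z - a) ^ (m' - 1) * 1)
          = β * Q z := by
        rw [Finset.sum_range_succ']
        have hf0 : 1 / (Nat.factorial 0 : ℝ) * (∏ j ∈ Finset.range 0, (β - (j:ℝ)))
            * a ^ (β - ((0:ℕ):ℝ)) * (((0:ℕ) : ℝ) * (z - a) ^ (0 - 1) * 1) = 0 := by
          simp
        rw [hf0, add_zero]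
        simp only [hQ, Finset.mul_sum]
        refine Finset.sum_congr rfl (fun i _ => ?_)
        have hprod : ∏ j ∈ Finset.range (i+1), (β - (j:ℝ))
            = β * ∏ j ∈ Finset.range i, ((β-1) - (j:ℝ)) := by
          rw [Finset.prod_range_succ', Nat.cast_zero, sub_zero, mul_comm]
          congr 1
          exact Finset.prod_congr rfl (fun j _ => by push_cast; ring)
        have hexp : a ^ (β - ((i+1:ℕ):ℝ)) = a ^ ((β-1) - (i:ℝ)) := by
          congr 1; push_cast; ring
        have hfact : ((i+1).factorial : ℝ) = ((i:ℝ)+1) * (i.factorial : ℝ) := by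
          rw [Nat.factorial_succ]; push_cast; ring
        simp only [Nat.add_sub_cancel]
        rw [hprod, hexp, hfact]
        have hi : (i.factorial : ℝ) ≠ 0 := Nat.cast_ne_zero.mpr (Nat.factorial_ne_zero i)
        have hi1 : ((i:ℝ)+1) ≠ 0 := by positivity
        push_cast
        field_simp
      have h3 := h1.sub h2
      rw [hsum] at h3
      have heq : β * (z ^ (β - 1) - Q z) = β * z ^ (β - 1) - β * Q z := by ring
      rw [heq]
      exact h3
    have hPa : P a = a ^ β := by
      simp only [hP]
      rw [Finset.sum_eq_single_of_mem 0 (by simp) (fun b _ hb => by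
        simp [zero_pow hb, sub_self])]
      simp
    have hsub : Set.uIcc a x ⊆ Set.Icc m K := Set.uIcc_subset_Icc ha hx
    have hbd : ∀ z ∈ Set.uIcc a x,
        ‖β * (z ^ (β - 1) - Q z)‖ ≤ |β| * (C * |x - a| ^ (n + 1)) := by
      intro z hz
      rw [Real.norm_eq_abs, abs_mul]
      refine mul_le_mul_of_nonneg_left ?_ (abs_nonneg β)
      calc |z ^ (β-1) - Q z| ≤ C * |z - a| ^ (n+1) := hIH a ha z (hsub hz)
        _ ≤ C * |x - a| ^ (n+1) := by
            refine mul_le_mul_of_nonneg_left ?_ hCpos.le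
            exact pow_le_pow_left₀ (abs_nonneg _) (abs_sub_le_of_mem_uIcc hz) _
    have hmvt := Convex.norm_image_sub_le_of_norm_hasDerivWithin_le
      (f := fun z => z ^ β - P z) (f' := fun z => β * (z ^ (β - 1) - Q z))
      (s := Set.uIcc a x)
      (fun z hz => (hderiv z (hsub hz)).hasDerivWithinAt)
      hbd (convex_uIcc a x) Set.left_mem_uIcc Set.right_mem_uIcc
    simp only [Real.norm_eq_abs] at hmvt
    have hzero : a ^ β - P a = 0 := by rw [hPa]; ring
    rw [hzero, sub_zero] at hmvt
    calc |x ^ β - P x| ≤ |β| * (C * |x - a| ^ (n+1)) * |x - a| := hmvt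
      _ = |β| * C * |x - a| ^ (n+1+1) := by rw [pow_succ]; ring
      _ ≤ (|β| * C + 1) * |x - a| ^ (n+1+1) := by
          nlinarith [pow_nonneg (abs_nonneg (x - a)) (n+1+1)]


def Spoly (ε : ℕ → ℝ) (m' k : ℕ) : ℝ :=
  ∑ i ∈ (Finset.Nat.antidiagonalTuple m' k).filter (fun i => ∀ j, 0 < i j),
    ∏ j, ε (i j)

lemma Spoly_eq_zero {ε : ℕ → ℝ} {m' k : ℕ} (h : k < m') : Spoly ε m' k = 0 := by
  rw [Spoly]
  have hempty : (Finset.Nat.antidiagonalTuple m' k).filter (fun i => ∀ j, 0 < i j) = ∅ := by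
    rw [Finset.eq_empty_iff_forall_notMem]
    intro i hi
    rw [Finset.mem_filter, Finset.Nat.mem_antidiagonalTuple] at hi
    have hle : m' ≤ k := by
      calc m' = ∑ _j : Fin m', 1 := by simp
        _ ≤ ∑ j, i j := Finset.sum_le_sum (fun j _ => hi.2 j)
        _ = k := hi.1
    omega
  rw [hempty, Finset.sum_empty]

lemma multinomial_decomp (ε : ℕ → ℝ) (n m' : ℕ) :
    (∑ k ∈ Finset.Icc 1 n, ε k) ^ m'
      = (∑ k ∈ Finset.range (n+1), Spoly ε m' k)
        + ∑ g ∈ (Fintype.piFinset (fun _ : Fin m' => Finset.Icc 1 n)).filter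
            (fun g => ¬ (∑ j, g j ≤ n)), ∏ j, ε (g j) := by
  classical
  have h1 : (∑ k ∈ Finset.Icc 1 n, ε k) ^ m'
      = ∑ g ∈ Fintype.piFinset (fun _ : Fin m' => Finset.Icc 1 n), ∏ j, ε (g j) := by
    rw [← Finset.prod_univ_sum]
    rw [Finset.prod_const, Finset.card_univ, Fintype.card_fin]
  have hmap : ∀ g ∈ (Fintype.piFinset (fun _ : Fin m' => Finset.Icc 1 n)).filter
      (fun g => ∑ j, g j ≤ n), (∑ j, g j) ∈ Finset.range (n+1) := by
    intro g hg
    rw [Finset.mem_filter] at hg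
    rw [Finset.mem_range]
    omega
  have hfib := Finset.sum_fiberwise_of_maps_to hmap (fun g => ∏ j, ε (g j))
  have h2 : ∑ k ∈ Finset.range (n+1), Spoly ε m' k
      = ∑ g ∈ (Fintype.piFinset (fun _ : Fin m' => Finset.Icc 1 n)).filter
          (fun g => ∑ j, g j ≤ n), ∏ j, ε (g j) := by
    rw [← hfib]
    refine Finset.sum_congr rfl (fun k hk => ?_)
    rw [Finset.mem_range] at hk
    rw [Spoly]
    refine Finset.sum_congr ?_ (fun _ _ => rfl)
    ext g
    simp only [Finset.mem_filter, Fintype.mem_piFinset, Finset.mem_Icc,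
      Finset.Nat.mem_antidiagonalTuple]
    constructor
    · rintro ⟨hsum, hpos⟩
      refine ⟨⟨fun j => ⟨hpos j, ?_⟩, by omega⟩, hsum⟩
      calc g j ≤ ∑ j', g j' := Finset.single_le_sum (fun j' _ => Nat.zero_le _)
            (Finset.mem_univ j)
        _ = k := hsum
        _ ≤ n := by omega
    · rintro ⟨⟨hmem, _⟩, hsum⟩
      exact ⟨hsum, fun j => (hmem j).1⟩
  rw [h1, h2, Finset.sum_filter_add_sum_filter_not]


set_option maxHeartbeats 2000000 in
lemma key (m K η : ℝ) (n : ℕ) (hm : 0 < m) (hmK : m ≤ K) :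
    ∃ C > (0:ℝ), ∀ (δ a x : ℝ) (ε : ℕ → ℝ), 0 ≤ δ → δ ≤ 1 →
      a ∈ Set.Icc m K → x ∈ Set.Icc m K →
      (∀ k : ℕ, 1 ≤ k → k ≤ n → |ε k| ≤ K * δ ^ (((k:ℝ)+2)/2)) →
      |x - (a + ∑ k ∈ Finset.Icc 1 n, ε k)| ≤ K * δ ^ (((n:ℝ)+3)/2) →
      |x ^ η - (a ^ η + ∑ m' ∈ Finset.Icc 1 n,
          1 / (Nat.factorial m' : ℝ) * (∏ j ∈ Finset.range m', (η - (j:ℝ))) * a ^ (η - (m':ℝ)) *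
            ∑ k ∈ Finset.range (n+1), Spoly ε m' k)|
        ≤ C * δ ^ (((n:ℝ)+3)/2) := by
  obtain ⟨C₁, hC₁pos, hC₁⟩ := taylor_rpow m K hm hmK n η
  have hK : 0 < K := hm.trans_le hmK
  set B : ℝ := ((n:ℝ)+1) * K with hB
  have hBpos : 0 < B := by positivity
  set A : ℕ → ℝ := fun m' =>
    (∏ j ∈ Finset.range m', |η - (j:ℝ)|) * (m ^ (η-(m':ℝ)) + K ^ (η-(m':ℝ))) with hA
  have hAnn : ∀ m', 0 ≤ A m' := by
    intro m'
    have h1 : (0:ℝ) ≤ ∏ j ∈ Finset.range m', |η - (j:ℝ)| :=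
      Finset.prod_nonneg (fun _ _ => abs_nonneg _)
    have h2 := Real.rpow_pos_of_pos hm (η-(m':ℝ))
    have h3 := Real.rpow_pos_of_pos hK (η-(m':ℝ))
    simp only [hA]
    nlinarith
  have hsum_nn : 0 ≤ ∑ m' ∈ Finset.Icc 1 n,
      A m' * ((m':ℝ) * B^(m'-1) * K + (n:ℝ)^m' * K^m') :=
    Finset.sum_nonneg (fun m' _ => mul_nonneg (hAnn m') (by positivity))
  refine ⟨C₁ * B^(n+1) + (∑ m' ∈ Finset.Icc 1 n,
      A m' * ((m':ℝ) * B^(m'-1) * K + (n:ℝ)^m' * K^m')) + 1,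
    by nlinarith [mul_pos hC₁pos (pow_pos hBpos (n+1))], ?_⟩
  intro δ a x ε hδ0 hδ1 ha hx hε happrox
  set ν : ℝ := ((n:ℝ)+3)/2 with hν
  have hνpos : (0:ℝ) < ν := by rw [hν]; positivity
  rcases eq_or_lt_of_le hδ0 with hδz | hδ
  · -- δ = 0
    have hz : δ = 0 := hδz.symm
    subst hz
    have hε0 : ∀ k, 1 ≤ k → k ≤ n → ε k = 0 := by
      intro k h1 h2
      have h := hε k h1 h2
      rw [Real.zero_rpow (by positivity : ((k:ℝ)+2)/2 ≠ 0)] at h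
      have := abs_nonneg (ε k)
      have : |ε k| = 0 := by linarith [h]
      exact abs_eq_zero.mp this
    have hEz : ∑ k ∈ Finset.Icc 1 n, ε k = 0 := by
      refine Finset.sum_eq_zero (fun k hk => ?_)
      rw [Finset.mem_Icc] at hk
      exact hε0 k hk.1 hk.2
    have hxa : x = a := by
      rw [Real.zero_rpow hνpos.ne'] at happrox
      have h := happrox
      rw [hEz, add_zero] at h
      have := abs_nonneg (x - a)
      have : |x - a| = 0 := by linarith [h]
      have := abs_eq_zero.mp this
      linarith
    have hSp : ∀ m' ∈ Finset.Icc 1 n, ∀ k ∈ Finset.range (n+1), Spoly ε m' k = 0 := by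
      intro m' hm' k hk
      rw [Finset.mem_Icc] at hm'
      rw [Finset.mem_range] at hk
      rw [Spoly]
      refine Finset.sum_eq_zero (fun i hi => ?_)
      rw [Finset.mem_filter, Finset.Nat.mem_antidiagonalTuple] at hi
      have hj : (0 : ℕ) < m' := hm'.1
      refine Finset.prod_eq_zero (Finset.mem_univ (⟨0, hj⟩ : Fin m')) ?_
      refine hε0 _ (hi.2 ⟨0, hj⟩) ?_
      calc i ⟨0, hj⟩ ≤ ∑ j', i j' :=
            Finset.single_le_sum (fun _ _ => Nat.zero_le _) (Finset.mem_univ _)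
        _ = k := hi.1
        _ ≤ n := by omega
    have hsz : ∑ m' ∈ Finset.Icc 1 n,
        1 / (Nat.factorial m' : ℝ) * (∏ j ∈ Finset.range m', (η - (j:ℝ))) * a ^ (η - (m':ℝ)) *
          ∑ k ∈ Finset.range (n+1), Spoly ε m' k = 0 := by
      refine Finset.sum_eq_zero (fun m' hm' => ?_)
      have : ∑ k ∈ Finset.range (n+1), Spoly ε m' k = 0 :=
        Finset.sum_eq_zero (fun k hk => hSp m' hm' k hk)
      rw [this, mul_zero]
    rw [hxa, hsz, add_zero, sub_self, abs_zero, Real.zero_rpow hνpos.ne', mul_zero]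
  · -- δ > 0
    have hδν : (0:ℝ) < δ ^ ν := Real.rpow_pos_of_pos hδ ν
    have h32pos : (0:ℝ) < δ ^ ((3:ℝ)/2) := Real.rpow_pos_of_pos hδ _
    have h32le1 : δ ^ ((3:ℝ)/2) ≤ 1 := Real.rpow_le_one hδ0 hδ1 (by norm_num)
    have hνle : δ ^ ν ≤ δ ^ ((3:ℝ)/2) := by
      refine Real.rpow_le_rpow_of_exponent_ge hδ hδ1 ?_
      rw [hν]
      have : (0:ℝ) ≤ (n:ℝ) := Nat.cast_nonneg n
      linarith
    have hε32 : ∀ k, 1 ≤ k → k ≤ n → |ε k| ≤ K * δ ^ ((3:ℝ)/2) := by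
      intro k h1 h2
      refine (hε k h1 h2).trans (mul_le_mul_of_nonneg_left ?_ hK.le)
      refine Real.rpow_le_rpow_of_exponent_ge hδ hδ1 ?_
      have : (1:ℝ) ≤ (k:ℝ) := by exact_mod_cast h1
      linarith
    set E := ∑ k ∈ Finset.Icc 1 n, ε k with hEdef
    set D := x - a with hDdef
    have hE : |E| ≤ (n:ℝ) * (K * δ ^ ((3:ℝ)/2)) := by
      calc |E| ≤ ∑ k ∈ Finset.Icc 1 n, |ε k| := Finset.abs_sum_le_sum_abs _ _
        _ ≤ ∑ _k ∈ Finset.Icc 1 n, K * δ ^ ((3:ℝ)/2) := by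
            refine Finset.sum_le_sum (fun k hk => ?_)
            rw [Finset.mem_Icc] at hk
            exact hε32 k hk.1 hk.2
        _ = (n:ℝ) * (K * δ ^ ((3:ℝ)/2)) := by
            rw [Finset.sum_const, Nat.card_Icc, nsmul_eq_mul]
            norm_num
    have hR : |D - E| ≤ K * δ ^ ν := by
      have h : x - (a + E) = D - E := by rw [hDdef]; ring
      rw [← h]
      exact happrox
    have hD32 : |D| ≤ B * δ ^ ((3:ℝ)/2) := by
      have h1 : |D| ≤ |D - E| + |E| := by
        have h := abs_add_le (D - E) E
        rwa [sub_add_cancel] at h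
      have h2 : K * δ ^ ν ≤ K * δ ^ ((3:ℝ)/2) := mul_le_mul_of_nonneg_left hνle hK.le
      rw [hB]
      nlinarith
    have hDB : |D| ≤ B := by nlinarith
    have hEB : |E| ≤ B := by
      rw [hB]
      nlinarith [Nat.cast_nonneg (α := ℝ) n]
    have hp1 : |D| ^ (n+1) ≤ B^(n+1) * δ ^ ν := by
      have h1 : |D| ^ (n+1) ≤ (B * δ ^ ((3:ℝ)/2)) ^ (n+1) :=
        pow_le_pow_left₀ (abs_nonneg _) hD32 _
      have h2 : (δ ^ ((3:ℝ)/2)) ^ (n+1) = δ ^ ((3:ℝ)/2 * ((n:ℝ)+1)) := by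
        rw [← Real.rpow_natCast (δ ^ ((3:ℝ)/2)) (n+1), ← Real.rpow_mul hδ0]
        push_cast
        ring_nf
      have h3 : δ ^ ((3:ℝ)/2 * ((n:ℝ)+1)) ≤ δ ^ ν := by
        refine Real.rpow_le_rpow_of_exponent_ge hδ hδ1 ?_
        rw [hν]
        have : (0:ℝ) ≤ (n:ℝ) := Nat.cast_nonneg n
        linarith
      calc |D| ^ (n+1) ≤ (B * δ ^ ((3:ℝ)/2)) ^ (n+1) := h1
        _ = B^(n+1) * (δ ^ ((3:ℝ)/2)) ^ (n+1) := mul_pow _ _ _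
        _ = B^(n+1) * δ ^ ((3:ℝ)/2 * ((n:ℝ)+1)) := by rw [h2]
        _ ≤ B^(n+1) * δ ^ ν := mul_le_mul_of_nonneg_left h3 (by positivity)
    have hTay : |x ^ η - ∑ m' ∈ Finset.range (n+1),
        1 / (Nat.factorial m' : ℝ) * (∏ j ∈ Finset.range m', (η - (j:ℝ)))
          * a ^ (η - (m':ℝ)) * D ^ m'| ≤ C₁ * (B^(n+1) * δ ^ ν) := by
      refine (hC₁ a ha x hx).trans ?_
      exact mul_le_mul_of_nonneg_left hp1 hC₁pos.le
    have hterm : ∀ m' ∈ Finset.Icc 1 n,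
        |1 / (Nat.factorial m' : ℝ) * (∏ j ∈ Finset.range m', (η - (j:ℝ))) * a ^ (η - (m':ℝ))|
          * |D ^ m' - ∑ k ∈ Finset.range (n+1), Spoly ε m' k|
        ≤ (A m' * ((m':ℝ) * B^(m'-1) * K + (n:ℝ)^m' * K^m')) * δ ^ ν := by
      intro m' hm'
      rw [Finset.mem_Icc] at hm'
      have hcoef : |1 / (Nat.factorial m' : ℝ) * (∏ j ∈ Finset.range m', (η - (j:ℝ)))
          * a ^ (η - (m':ℝ))| ≤ A m' := by
        rw [abs_mul, abs_mul, Finset.abs_prod]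
        have hf1 : |1 / (Nat.factorial m' : ℝ)| ≤ 1 := by
          rw [abs_of_pos (by positivity : (0:ℝ) < 1 / (Nat.factorial m' : ℝ))]
          rw [div_le_one (by positivity)]
          exact_mod_cast Nat.one_le_iff_ne_zero.mpr (Nat.factorial_ne_zero m')
        have hra : |a ^ (η - (m':ℝ))| ≤ m ^ (η-(m':ℝ)) + K ^ (η-(m':ℝ)) := by
          rw [abs_of_pos (Real.rpow_pos_of_pos (lt_of_lt_of_le hm ha.1) _)]
          exact rpow_base_bound hm ha
        have hprodnn : (0:ℝ) ≤ ∏ j ∈ Finset.range m', |η - (j:ℝ)| :=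
          Finset.prod_nonneg (fun _ _ => abs_nonneg _)
        simp only [hA]
        calc |1 / (Nat.factorial m' : ℝ)| * (∏ j ∈ Finset.range m', |η - (j:ℝ)|)
              * |a ^ (η - (m':ℝ))|
            ≤ 1 * (∏ j ∈ Finset.range m', |η - (j:ℝ)|)
                * (m ^ (η-(m':ℝ)) + K ^ (η-(m':ℝ))) := by
              have h2 := Real.rpow_pos_of_pos hm (η-(m':ℝ))
              have h3 := Real.rpow_pos_of_pos hK (η-(m':ℝ))
              refine mul_le_mul (mul_le_mul_of_nonneg_right hf1 hprodnn) hra (abs_nonneg _) ?_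
              nlinarith
          _ = (∏ j ∈ Finset.range m', |η - (j:ℝ)|) * (m ^ (η-(m':ℝ)) + K ^ (η-(m':ℝ))) := by
              ring
      have hpd : |D ^ m' - E ^ m'| ≤ (m':ℝ) * B^(m'-1) * (K * δ ^ ν) := by
        refine (abs_pow_sub_pow_le hBpos.le hDB hEB m').trans ?_
        exact mul_le_mul_of_nonneg_left hR (by positivity)
      have hcard : (((Fintype.piFinset (fun _ : Fin m' => Finset.Icc 1 n)).filter
          (fun g => ¬ (∑ j, g j ≤ n))).card : ℝ) ≤ (n:ℝ)^m' := by
        have h1 : ((Fintype.piFinset (fun _ : Fin m' => Finset.Icc 1 n)).filter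
            (fun g => ¬ (∑ j, g j ≤ n))).card
            ≤ (Fintype.piFinset (fun _ : Fin m' => Finset.Icc 1 n)).card :=
          Finset.card_le_card (Finset.filter_subset _ _)
        have h2 : (Fintype.piFinset (fun _ : Fin m' => Finset.Icc 1 n)).card = n^m' := by
          rw [Fintype.card_piFinset]
          simp [Nat.card_Icc]
        have h3 : ((Fintype.piFinset (fun _ : Fin m' => Finset.Icc 1 n)).filter
            (fun g => ¬ (∑ j, g j ≤ n))).card ≤ n^m' := h1.trans_eq h2
        calc (((Fintype.piFinset (fun _ : Fin m' => Finset.Icc 1 n)).filter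
              (fun g => ¬ (∑ j, g j ≤ n))).card : ℝ) ≤ ((n^m' : ℕ) : ℝ) := by
              exact_mod_cast h3
          _ = (n:ℝ)^m' := by push_cast; ring
      have htail : |E ^ m' - ∑ k ∈ Finset.range (n+1), Spoly ε m' k|
          ≤ (n:ℝ)^m' * (K^m' * δ ^ ν) := by
        have hdec := multinomial_decomp ε n m'
        have heq : E ^ m' - ∑ k ∈ Finset.range (n+1), Spoly ε m' k
            = ∑ g ∈ (Fintype.piFinset (fun _ : Fin m' => Finset.Icc 1 n)).filter
                (fun g => ¬ (∑ j, g j ≤ n)), ∏ j, ε (g j) := by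
          rw [hEdef, hdec]; ring
        rw [heq]
        have hper : ∀ g ∈ (Fintype.piFinset (fun _ : Fin m' => Finset.Icc 1 n)).filter
            (fun g => ¬ (∑ j, g j ≤ n)), |∏ j, ε (g j)| ≤ K^m' * δ ^ ν := by
          intro g hg
          rw [Finset.mem_filter, Fintype.mem_piFinset] at hg
          have hgj : ∀ j, 1 ≤ g j ∧ g j ≤ n := by
            intro j
            have := hg.1 j
            rwa [Finset.mem_Icc] at this
          have hsg : n + 1 ≤ ∑ j, g j := by
            have := hg.2
            omega
          calc |∏ j, ε (g j)| = ∏ j, |ε (g j)| := Finset.abs_prod _ _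
            _ ≤ ∏ j : Fin m', (K * δ ^ (((g j : ℝ)+2)/2)) := by
                refine Finset.prod_le_prod (fun _ _ => abs_nonneg _) (fun j _ => ?_)
                exact hε (g j) (hgj j).1 (hgj j).2
            _ = K^m' * ∏ j : Fin m', δ ^ (((g j : ℝ)+2)/2) := by
                rw [Finset.prod_mul_distrib, Finset.prod_const, Finset.card_univ,
                  Fintype.card_fin]
            _ = K^m' * δ ^ (∑ j : Fin m', ((g j : ℝ)+2)/2) := by
                rw [Real.rpow_sum_of_pos hδ]
            _ ≤ K^m' * δ ^ ν := by
                refine mul_le_mul_of_nonneg_left ?_ (by positivity)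
                refine Real.rpow_le_rpow_of_exponent_ge hδ hδ1 ?_
                have hsumeq : ∑ j : Fin m', ((g j : ℝ)+2)/2
                    = ((∑ j, g j : ℕ) : ℝ)/2 + (m':ℝ) := by
                  rw [← Finset.sum_div, Finset.sum_add_distrib, Finset.sum_const,
                    Finset.card_univ, Fintype.card_fin]
                  push_cast
                  ring
                rw [hsumeq, hν]
                have h1 : ((n:ℝ)+1) ≤ ((∑ j, g j : ℕ) : ℝ) := by exact_mod_cast hsg
                have h2 : (1:ℝ) ≤ (m':ℝ) := by exact_mod_cast hm'.1
                linarith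
        calc |∑ g ∈ (Fintype.piFinset (fun _ : Fin m' => Finset.Icc 1 n)).filter
              (fun g => ¬ (∑ j, g j ≤ n)), ∏ j, ε (g j)|
            ≤ ∑ g ∈ (Fintype.piFinset (fun _ : Fin m' => Finset.Icc 1 n)).filter
              (fun g => ¬ (∑ j, g j ≤ n)), |∏ j, ε (g j)| := Finset.abs_sum_le_sum_abs _ _
          _ ≤ ((Fintype.piFinset (fun _ : Fin m' => Finset.Icc 1 n)).filter
              (fun g => ¬ (∑ j, g j ≤ n))).card • (K^m' * δ ^ ν) :=
              Finset.sum_le_card_nsmul _ _ _ hper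
          _ = (((Fintype.piFinset (fun _ : Fin m' => Finset.Icc 1 n)).filter
              (fun g => ¬ (∑ j, g j ≤ n))).card : ℝ) * (K^m' * δ ^ ν) := by
              rw [nsmul_eq_mul]
          _ ≤ (n:ℝ)^m' * (K^m' * δ ^ ν) := by
              refine mul_le_mul_of_nonneg_right hcard (by positivity)
      have htri : |D ^ m' - ∑ k ∈ Finset.range (n+1), Spoly ε m' k|
          ≤ (m':ℝ) * B^(m'-1) * (K * δ ^ ν) + (n:ℝ)^m' * (K^m' * δ ^ ν) := by
        have h : D ^ m' - ∑ k ∈ Finset.range (n+1), Spoly ε m' k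
            = (D ^ m' - E ^ m') + (E ^ m' - ∑ k ∈ Finset.range (n+1), Spoly ε m' k) := by
          ring
        rw [h]
        exact (abs_add_le _ _).trans (add_le_add hpd htail)
      calc |1 / (Nat.factorial m' : ℝ) * (∏ j ∈ Finset.range m', (η - (j:ℝ)))
            * a ^ (η - (m':ℝ))|
          * |D ^ m' - ∑ k ∈ Finset.range (n+1), Spoly ε m' k|
          ≤ A m' * ((m':ℝ) * B^(m'-1) * (K * δ ^ ν) + (n:ℝ)^m' * (K^m' * δ ^ ν)) :=
            mul_le_mul hcoef htri (abs_nonneg _) (hAnn m')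
        _ = (A m' * ((m':ℝ) * B^(m'-1) * K + (n:ℝ)^m' * K^m')) * δ ^ ν := by ring
    have hP0 : ∑ m' ∈ Finset.range (n+1),
        1 / (Nat.factorial m' : ℝ) * (∏ j ∈ Finset.range m', (η - (j:ℝ)))
          * a ^ (η - (m':ℝ)) * D ^ m'
        = a ^ η + ∑ m' ∈ Finset.Icc 1 n,
        1 / (Nat.factorial m' : ℝ) * (∏ j ∈ Finset.range m', (η - (j:ℝ)))
          * a ^ (η - (m':ℝ)) * D ^ m' := by
      rw [sum_range_succ_eq]
      congr 1
      simp
    have hEXP : x ^ η - (a ^ η + ∑ m' ∈ Finset.Icc 1 n,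
          1 / (Nat.factorial m' : ℝ) * (∏ j ∈ Finset.range m', (η - (j:ℝ)))
            * a ^ (η - (m':ℝ)) * ∑ k ∈ Finset.range (n+1), Spoly ε m' k)
        = (x ^ η - ∑ m' ∈ Finset.range (n+1),
            1 / (Nat.factorial m' : ℝ) * (∏ j ∈ Finset.range m', (η - (j:ℝ)))
              * a ^ (η - (m':ℝ)) * D ^ m')
          + ∑ m' ∈ Finset.Icc 1 n,
            (1 / (Nat.factorial m' : ℝ) * (∏ j ∈ Finset.range m', (η - (j:ℝ)))
              * a ^ (η - (m':ℝ))) * (D ^ m' - ∑ k ∈ Finset.range (n+1), Spoly ε m' k) := by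
      simp only [mul_sub]
      rw [Finset.sum_sub_distrib, hP0]
      ring
    rw [hEXP]
    calc |(x ^ η - ∑ m' ∈ Finset.range (n+1),
            1 / (Nat.factorial m' : ℝ) * (∏ j ∈ Finset.range m', (η - (j:ℝ)))
              * a ^ (η - (m':ℝ)) * D ^ m')
          + ∑ m' ∈ Finset.Icc 1 n,
            (1 / (Nat.factorial m' : ℝ) * (∏ j ∈ Finset.range m', (η - (j:ℝ)))
              * a ^ (η - (m':ℝ))) * (D ^ m' - ∑ k ∈ Finset.range (n+1), Spoly ε m' k)|
        ≤ |x ^ η - ∑ m' ∈ Finset.range (n+1),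
            1 / (Nat.factorial m' : ℝ) * (∏ j ∈ Finset.range m', (η - (j:ℝ)))
              * a ^ (η - (m':ℝ)) * D ^ m'|
          + |∑ m' ∈ Finset.Icc 1 n,
            (1 / (Nat.factorial m' : ℝ) * (∏ j ∈ Finset.range m', (η - (j:ℝ)))
              * a ^ (η - (m':ℝ))) * (D ^ m' - ∑ k ∈ Finset.range (n+1), Spoly ε m' k)| :=
          abs_add_le _ _
      _ ≤ C₁ * (B^(n+1) * δ ^ ν) + ∑ m' ∈ Finset.Icc 1 n,
            (A m' * ((m':ℝ) * B^(m'-1) * K + (n:ℝ)^m' * K^m')) * δ ^ ν := by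
          refine add_le_add hTay ?_
          refine (Finset.abs_sum_le_sum_abs _ _).trans ?_
          refine Finset.sum_le_sum (fun m' hm' => ?_)
          rw [abs_mul]
          exact hterm m' hm'
      _ = (C₁ * B^(n+1) + ∑ m' ∈ Finset.Icc 1 n,
            A m' * ((m':ℝ) * B^(m'-1) * K + (n:ℝ)^m' * K^m')) * δ ^ ν := by
          rw [← Finset.sum_mul]
          ring
      _ ≤ (C₁ * B^(n+1) + (∑ m' ∈ Finset.Icc 1 n,
            A m' * ((m':ℝ) * B^(m'-1) * K + (n:ℝ)^m' * K^m')) + 1) * δ ^ ν := by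
          nlinarith

end VFA


/-- Accuracy of the `n`-th order value function approximation under power utility and
pure stochastic volatility: if the approximation terms `ψ_k` of the linearized problem
satisfy the stated bounds, then the induced expansion `V_k` of
`V = (w^{1-γ}/(1-γ)) ψ^η` is accurate to order `(T-t)^{(n+3)/2}` uniformly in `y`. -/
theorem value_function_approximation_accuracy
    (γ ρ η : ℝ) (n : ℕ) (T w m K : ℝ)
    (hγ : 1 < γ) (hρ : ρ ∈ Set.Ioo (-1 : ℝ) 1)
    (hη : η = γ / (γ + (1 - γ) * ρ^2))
    (hT : 0 < T) (hw : 0 < w) (hm : 0 < m) (hmK : m ≤ K)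
    (ψ : ℝ → ℝ → ℝ) (ψf : ℕ → ℝ → ℝ → ℝ)
    (hψ0indep : ∀ t y y' : ℝ, ψf 0 t y = ψf 0 t y')
    (hψbd : ∀ t ∈ Set.Icc (0:ℝ) T, ∀ y : ℝ, m ≤ ψ t y ∧ ψ t y ≤ K)
    (hψ0bd : ∀ t ∈ Set.Icc (0:ℝ) T, ∀ y : ℝ, m ≤ ψf 0 t y ∧ ψf 0 t y ≤ K)
    (hψk : ∀ k : ℕ, 1 ≤ k → k ≤ n → ∀ t ∈ Set.Icc (0:ℝ) T, ∀ y : ℝ,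
      |ψf k t y| ≤ K * (T - t) ^ (((k : ℝ) + 2) / 2))
    (hψapprox : ∀ t ∈ Set.Icc (0:ℝ) T, ∀ y : ℝ,
      |ψ t y - ∑ k ∈ Finset.range (n + 1), ψf k t y|
        ≤ K * (T - t) ^ (((n : ℝ) + 3) / 2))
    (V : ℝ → ℝ → ℝ)
    (hV : ∀ t y, V t y = w ^ (1 - γ) / (1 - γ) * ψ t y ^ η)
    (Vk : ℕ → ℝ → ℝ → ℝ)
    (hV0 : ∀ t y, Vk 0 t y = w ^ (1 - γ) / (1 - γ) * ψf 0 t y ^ η)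
    (hVk : ∀ k : ℕ, 1 ≤ k → ∀ t y, Vk k t y =
      w ^ (1 - γ) / (1 - γ) *
        ∑ m' ∈ Finset.Icc 1 k,
          (1 / (Nat.factorial m' : ℝ)) *
          (∏ j ∈ Finset.range m', (η - (j : ℝ))) *
          ψf 0 t y ^ (η - (m' : ℝ)) *
          ∑ i ∈ (Finset.Nat.antidiagonalTuple m' k).filter (fun i => ∀ j, 0 < i j),
            ∏ j, ψf (i j) t y) :
    ∃ C > (0:ℝ), ∀ t ∈ Set.Icc (max 0 (T - 1)) T, ∀ y : ℝ,
      |V t y - ∑ k ∈ Finset.range (n + 1), Vk k t y|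
        ≤ C * (T - t) ^ (((n : ℝ) + 3) / 2) := by
  classical
  obtain ⟨C₀, hC₀pos, hkey⟩ := VFA.key m K η n hm hmK
  have hwpos : (0:ℝ) < w ^ (1 - γ) := Real.rpow_pos_of_pos hw _
  have hcne : w ^ (1 - γ) / (1 - γ) ≠ 0 :=
    div_ne_zero hwpos.ne' (by linarith)
  refine ⟨|w ^ (1 - γ) / (1 - γ)| * C₀, mul_pos (abs_pos.mpr hcne) hC₀pos, ?_⟩
  intro t ht y
  have ht0T : t ∈ Set.Icc (0:ℝ) T := ⟨le_trans (le_max_left 0 (T-1)) ht.1, ht.2⟩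
  have hδ0 : 0 ≤ T - t := by linarith [ht.2]
  have hδ1 : T - t ≤ 1 := by
    have := le_trans (le_max_right 0 (T-1)) ht.1
    linarith
  set ε : ℕ → ℝ := fun k => ψf k t y with hεdef
  -- rewrite the sum of the Vk
  have hVsum : ∑ k ∈ Finset.range (n + 1), Vk k t y
      = w ^ (1 - γ) / (1 - γ) * (ψf 0 t y ^ η + ∑ m' ∈ Finset.Icc 1 n,
          1 / (Nat.factorial m' : ℝ) * (∏ j ∈ Finset.range m', (η - (j:ℝ)))
            * ψf 0 t y ^ (η - (m':ℝ)) *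
          ∑ k ∈ Finset.range (n+1), VFA.Spoly ε m' k) := by
    rw [VFA.sum_range_succ_eq (fun k => Vk k t y) n, hV0]
    have h1 : ∀ k ∈ Finset.Icc 1 n, Vk k t y
        = w ^ (1 - γ) / (1 - γ) * ∑ m' ∈ Finset.Icc 1 n,
            1 / (Nat.factorial m' : ℝ) * (∏ j ∈ Finset.range m', (η - (j:ℝ)))
              * ψf 0 t y ^ (η - (m':ℝ)) * VFA.Spoly ε m' k := by
      intro k hk
      rw [Finset.mem_Icc] at hk
      rw [hVk k hk.1 t y]
      congr 1
      rw [← Finset.sum_subset (Finset.Icc_subset_Icc_right hk.2) (fun m' _ hm' => ?_)]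
      · refine Finset.sum_congr rfl (fun m' _ => ?_)
        simp only [VFA.Spoly, hεdef]
      · have hkm : k < m' := by
          rw [Finset.mem_Icc] at *
          omega
        rw [VFA.Spoly_eq_zero hkm, mul_zero]
    rw [Finset.sum_congr rfl h1, ← Finset.mul_sum]
    rw [Finset.sum_comm]
    have h2 : ∀ m' ∈ Finset.Icc 1 n,
        ∑ k ∈ Finset.Icc 1 n,
          1 / (Nat.factorial m' : ℝ) * (∏ j ∈ Finset.range m', (η - (j:ℝ)))
            * ψf 0 t y ^ (η - (m':ℝ)) * VFA.Spoly ε m' k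
        = 1 / (Nat.factorial m' : ℝ) * (∏ j ∈ Finset.range m', (η - (j:ℝ)))
            * ψf 0 t y ^ (η - (m':ℝ)) *
          ∑ k ∈ Finset.range (n+1), VFA.Spoly ε m' k := by
      intro m' hm'
      rw [Finset.mem_Icc] at hm'
      rw [Finset.mul_sum, VFA.sum_range_succ_eq (fun k =>
        1 / (Nat.factorial m' : ℝ) * (∏ j ∈ Finset.range m', (η - (j:ℝ)))
          * ψf 0 t y ^ (η - (m':ℝ)) * VFA.Spoly ε m' k) n]
      rw [VFA.Spoly_eq_zero (show (0:ℕ) < m' from hm'.1), mul_zero, zero_add]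
    rw [Finset.sum_congr rfl h2, mul_add]
  -- apply the key estimate
  have happ := hψapprox t ht0T y
  rw [VFA.sum_range_succ_eq (fun k => ψf k t y) n] at happ
  have happ' : |ψ t y - (ψf 0 t y + ∑ k ∈ Finset.Icc 1 n, ε k)|
      ≤ K * (T - t) ^ (((n:ℝ) + 3) / 2) := by
    have he : ∑ k ∈ Finset.Icc 1 n, ε k = ∑ k ∈ Finset.Icc 1 n, ψf k t y :=
      Finset.sum_congr rfl (fun k _ => rfl)
    rw [he]
    exact happ
  have hb0 := hψ0bd t ht0T y
  have hbx := hψbd t ht0T y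
  have hkey' := hkey (T - t) (ψf 0 t y) (ψ t y) ε hδ0 hδ1
    ⟨hb0.1, hb0.2⟩ ⟨hbx.1, hbx.2⟩
    (fun k h1 h2 => hψk k h1 h2 t ht0T y) happ'
  have hdiff : V t y - ∑ k ∈ Finset.range (n + 1), Vk k t y
      = w ^ (1 - γ) / (1 - γ) * (ψ t y ^ η - (ψf 0 t y ^ η + ∑ m' ∈ Finset.Icc 1 n,
          1 / (Nat.factorial m' : ℝ) * (∏ j ∈ Finset.range m', (η - (j:ℝ)))
            * ψf 0 t y ^ (η - (m':ℝ)) *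
          ∑ k ∈ Finset.range (n+1), VFA.Spoly ε m' k)) := by
    rw [hV, hVsum]
    ring
  rw [hdiff, abs_mul, mul_assoc]
  exact mul_le_mul_of_nonneg_left hkey' (abs_nonneg _)
end
end
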